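/- arXiv:2012.07689 — 5 statements merged into one kernel-verified Lean document; each statement's English description precedes it below -/
import Mathlib

section
/- Let A ∈ ℝ^{l×m×n} be a tensor, and let U ∈ ℝ^{l×p}, V ∈ ℝ^{m×q}, W ∈ ℝ^{n×r} have orthonormal columns with p ≤ l, q ≤ m, r ≤ n. Then the least squares problem min_S ‖A − (U,V,W)·S‖ over S ∈ ℝ^{p×q×r} has the unique solution S = (Uᵀ,Vᵀ,Wᵀ)·A, whose elements are s_{λμν} = A·(u_λ, v_μ, w_ν) (the trilinear form of A on the respective columns). -/
open scoped BigOperators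
open Sum

noncomputable section

/-- Multilinear (Tucker) tensor–matrix product: `(U,V,W)·A`. -/
def tmul {ι₁ ι₂ ι₃ κ₁ κ₂ κ₃ : Type*} [Fintype ι₁] [Fintype ι₂] [Fintype ι₃]
    (U : κ₁ → ι₁ → ℝ) (V : κ₂ → ι₂ → ℝ) (W : κ₃ → ι₃ → ℝ)
    (A : ι₁ → ι₂ → ι₃ → ℝ) : κ₁ → κ₂ → κ₃ → ℝ :=
  fun i j k => ∑ a, ∑ b, ∑ c, U i a * V j b * W k c * A a b c

/-- Squared Frobenius norm of a 3-tensor. -/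
def fro2 {ι₁ ι₂ ι₃ : Type*} [Fintype ι₁] [Fintype ι₂] [Fintype ι₃]
    (A : ι₁ → ι₂ → ι₃ → ℝ) : ℝ := ∑ i, ∑ j, ∑ k, (A i j k) ^ 2

/-- Frobenius norm of a 3-tensor. -/
def fro {ι₁ ι₂ ι₃ : Type*} [Fintype ι₁] [Fintype ι₂] [Fintype ι₃]
    (A : ι₁ → ι₂ → ι₃ → ℝ) : ℝ := Real.sqrt (fro2 A)

/-- Trilinear form `A·(x,y,z)`. -/
def tri {ι₁ ι₂ ι₃ : Type*} [Fintype ι₁] [Fintype ι₂] [Fintype ι₃]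
    (A : ι₁ → ι₂ → ι₃ → ℝ) (x : ι₁ → ℝ) (y : ι₂ → ℝ) (z : ι₃ → ℝ) : ℝ :=
  ∑ i, ∑ j, ∑ k, A i j k * x i * y j * z k

/-- Unit vector (Euclidean norm 1). -/
def unitVec {ι : Type*} [Fintype ι] (x : ι → ℝ) : Prop := ∑ i, x i ^ 2 = 1

/-- A matrix (given as a family of rows) has orthonormal columns. -/
def orthCols {ι κ : Type*} [Fintype ι] [DecidableEq κ] (X : ι → κ → ℝ) : Prop :=
  ∀ a b, (∑ i, X i a * X i b) = if a = b then (1 : ℝ) else 0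

section Aux

lemma factor3 {ι₁ ι₂ ι₃ : Type*} [Fintype ι₁] [Fintype ι₂] [Fintype ι₃]
    (u : ι₁ → ℝ) (v : ι₂ → ℝ) (w : ι₃ → ℝ) :
    ∑ i, ∑ j, ∑ k, u i * v j * w k = (∑ i, u i) * (∑ j, v j) * (∑ k, w k) := by
  rw [Finset.sum_mul_sum, Finset.sum_mul]
  refine Finset.sum_congr rfl fun i _ => ?_
  rw [Finset.sum_mul]
  refine Finset.sum_congr rfl fun j _ => ?_
  rw [Finset.mul_sum]

variable {l m n p q r : ℕ}
variable (U : Fin l → Fin p → ℝ) (V : Fin m → Fin q → ℝ) (W : Fin n → Fin r → ℝ)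

/-- flattened coefficient -/
def coef (x : Fin l × Fin m × Fin n) (y : Fin p × Fin q × Fin r) : ℝ :=
  U x.1 y.1 * V x.2.1 y.2.1 * W x.2.2 y.2.2

lemma tmul_flat (S : Fin p → Fin q → Fin r → ℝ) (i j k) :
    tmul U V W S i j k
      = ∑ y : Fin p × Fin q × Fin r, coef U V W (i, j, k) y * S y.1 y.2.1 y.2.2 := by
  simp [tmul, coef, Fintype.sum_prod_type]

lemma fro2_flat {ι₁ ι₂ ι₃ : Type*} [Fintype ι₁] [Fintype ι₂] [Fintype ι₃]
    (B : ι₁ → ι₂ → ι₃ → ℝ) :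
    fro2 B = ∑ x : ι₁ × ι₂ × ι₃, B x.1 x.2.1 x.2.2 ^ 2 := by
  simp [fro2, Fintype.sum_prod_type]

lemma coef_orth (hU : orthCols U) (hV : orthCols V) (hW : orthCols W)
    (y z : Fin p × Fin q × Fin r) :
    ∑ x : Fin l × Fin m × Fin n, coef U V W x y * coef U V W x z
      = if y = z then 1 else 0 := by
  have : ∑ x : Fin l × Fin m × Fin n, coef U V W x y * coef U V W x z
      = ∑ i, ∑ j, ∑ k, (U i y.1 * U i z.1) * (V j y.2.1 * V j z.2.1)
          * (W k y.2.2 * W k z.2.2) := by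
    rw [Fintype.sum_prod_type]
    refine Finset.sum_congr rfl fun i _ => ?_
    rw [Fintype.sum_prod_type]
    refine Finset.sum_congr rfl fun j _ => Finset.sum_congr rfl fun k _ => ?_
    simp only [coef]; ring
  rw [this, factor3, hU y.1 z.1, hV y.2.1 z.2.1, hW y.2.2 z.2.2]
  rcases y with ⟨y1, y2, y3⟩; rcases z with ⟨z1, z2, z3⟩
  by_cases h1 : y1 = z1 <;> by_cases h2 : y2 = z2 <;> by_cases h3 : y3 = z3 <;>
    simp [h1, h2, h3, Prod.ext_iff]

/-- inner product of two tensors, flattened -/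
def inn3 (S T : Fin p → Fin q → Fin r → ℝ) : ℝ :=
  ∑ y : Fin p × Fin q × Fin r, S y.1 y.2.1 y.2.2 * T y.1 y.2.1 y.2.2

lemma inner_tmul (hU : orthCols U) (hV : orthCols V) (hW : orthCols W)
    (S T : Fin p → Fin q → Fin r → ℝ) :
    ∑ x : Fin l × Fin m × Fin n,
        tmul U V W S x.1 x.2.1 x.2.2 * tmul U V W T x.1 x.2.1 x.2.2
      = inn3 S T := by
  have step1 : ∑ x : Fin l × Fin m × Fin n,
        tmul U V W S x.1 x.2.1 x.2.2 * tmul U V W T x.1 x.2.1 x.2.2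
      = ∑ y : Fin p × Fin q × Fin r, ∑ z : Fin p × Fin q × Fin r,
          (∑ x : Fin l × Fin m × Fin n, coef U V W x y * coef U V W x z)
            * (S y.1 y.2.1 y.2.2 * T z.1 z.2.1 z.2.2) := by
    have h1 : ∀ x : Fin l × Fin m × Fin n,
        tmul U V W S x.1 x.2.1 x.2.2 * tmul U V W T x.1 x.2.1 x.2.2
          = ∑ y : Fin p × Fin q × Fin r, ∑ z : Fin p × Fin q × Fin r,
              (coef U V W x y * coef U V W x z)
                * (S y.1 y.2.1 y.2.2 * T z.1 z.2.1 z.2.2) := by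
      intro x
      rw [tmul_flat, tmul_flat, Finset.sum_mul_sum]
      exact Finset.sum_congr rfl fun y _ => Finset.sum_congr rfl fun z _ => by ring
    rw [Finset.sum_congr rfl fun x _ => h1 x, Finset.sum_comm]
    refine Finset.sum_congr rfl fun y _ => ?_
    rw [Finset.sum_comm]
    refine Finset.sum_congr rfl fun z _ => ?_
    rw [Finset.sum_mul]
  rw [step1]
  simp only [coef_orth U V W hU hV hW, ite_mul, one_mul, zero_mul]
  simp [inn3, Finset.sum_ite_eq]

lemma adjoint_tmul (A : Fin l → Fin m → Fin n → ℝ)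
    (S : Fin p → Fin q → Fin r → ℝ) :
    ∑ x : Fin l × Fin m × Fin n, A x.1 x.2.1 x.2.2 * tmul U V W S x.1 x.2.1 x.2.2
      = inn3 (tmul (fun a i => U i a) (fun b j => V j b) (fun c k => W k c) A) S := by
  have hhat : ∀ y : Fin p × Fin q × Fin r,
      tmul (fun a i => U i a) (fun b j => V j b) (fun c k => W k c) A y.1 y.2.1 y.2.2
        = ∑ x : Fin l × Fin m × Fin n, coef U V W x y * A x.1 x.2.1 x.2.2 := by
    intro y; simp [tmul, coef, Fintype.sum_prod_type]
  have step1 : ∑ x : Fin l × Fin m × Fin n,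
        A x.1 x.2.1 x.2.2 * tmul U V W S x.1 x.2.1 x.2.2
      = ∑ y : Fin p × Fin q × Fin r,
          (∑ x : Fin l × Fin m × Fin n, coef U V W x y * A x.1 x.2.1 x.2.2)
            * S y.1 y.2.1 y.2.2 := by
    have h1 : ∀ x : Fin l × Fin m × Fin n,
        A x.1 x.2.1 x.2.2 * tmul U V W S x.1 x.2.1 x.2.2
          = ∑ y : Fin p × Fin q × Fin r,
              (coef U V W x y * A x.1 x.2.1 x.2.2) * S y.1 y.2.1 y.2.2 := by
      intro x
      rw [tmul_flat, Finset.mul_sum]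
      exact Finset.sum_congr rfl fun y _ => by ring
    rw [Finset.sum_congr rfl fun x _ => h1 x, Finset.sum_comm]
    refine Finset.sum_congr rfl fun y _ => ?_
    rw [Finset.sum_mul]
  rw [step1, inn3]
  exact Finset.sum_congr rfl fun y _ => by rw [hhat]

lemma key_identity (hU : orthCols U) (hV : orthCols V) (hW : orthCols W)
    (A : Fin l → Fin m → Fin n → ℝ) (S : Fin p → Fin q → Fin r → ℝ) :
    fro2 (fun i j k => A i j k - tmul U V W S i j k)
      = fro2 (fun i j k => A i j k -
          tmul U V W (tmul (fun a i => U i a) (fun b j => V j b) (fun c k => W k c) A) i j k)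
        + ∑ y : Fin p × Fin q × Fin r,
            (S y.1 y.2.1 y.2.2 -
              tmul (fun a i => U i a) (fun b j => V j b) (fun c k => W k c) A
                y.1 y.2.1 y.2.2) ^ 2 := by
  set Sh := tmul (fun a i => U i a) (fun b j => V j b) (fun c k => W k c) A with hSh
  have expand : ∀ T : Fin p → Fin q → Fin r → ℝ,
      fro2 (fun i j k => A i j k - tmul U V W T i j k)
        = fro2 A - 2 * inn3 Sh T + inn3 T T := by
    intro T
    rw [fro2_flat, fro2_flat]
    have : ∀ x : Fin l × Fin m × Fin n,
        (A x.1 x.2.1 x.2.2 - tmul U V W T x.1 x.2.1 x.2.2) ^ 2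
          = A x.1 x.2.1 x.2.2 ^ 2
            - 2 * (A x.1 x.2.1 x.2.2 * tmul U V W T x.1 x.2.1 x.2.2)
            + tmul U V W T x.1 x.2.1 x.2.2 * tmul U V W T x.1 x.2.1 x.2.2 := by
      intro x; ring
    rw [Finset.sum_congr rfl fun x _ => this x]
    rw [Finset.sum_add_distrib, Finset.sum_sub_distrib, ← Finset.mul_sum,
      adjoint_tmul, inner_tmul U V W hU hV hW]
  have e1 := expand S
  have e2 := expand Sh
  have hq : ∑ y : Fin p × Fin q × Fin r,
      (S y.1 y.2.1 y.2.2 - Sh y.1 y.2.1 y.2.2) ^ 2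
        = inn3 S S - 2 * inn3 Sh S + inn3 Sh Sh := by
    simp only [inn3, Finset.mul_sum]
    rw [← Finset.sum_sub_distrib, ← Finset.sum_add_distrib]
    exact Finset.sum_congr rfl fun y _ => by ring
  rw [e1, e2, hq]
  ring

lemma fro2_nonneg {ι₁ ι₂ ι₃ : Type*} [Fintype ι₁] [Fintype ι₂] [Fintype ι₃]
    (B : ι₁ → ι₂ → ι₃ → ℝ) : 0 ≤ fro2 B := by
  rw [fro2_flat]
  exact Finset.sum_nonneg fun x _ => sq_nonneg _

end Aux

/-- the least squares problem `min_S ‖A − (U,V,W)·S‖` for matrices with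
orthonormal columns has the unique solution `S = (Uᵀ,Vᵀ,Wᵀ)·A`, with elements
`s_{λμν} = A·(u_λ,v_μ,w_ν)`. -/
theorem stmt_1 {l m n p q r : ℕ} (hp : p ≤ l) (hq : q ≤ m) (hr : r ≤ n)
    (A : Fin l → Fin m → Fin n → ℝ)
    (U : Fin l → Fin p → ℝ) (V : Fin m → Fin q → ℝ) (W : Fin n → Fin r → ℝ)
    (hU : orthCols U) (hV : orthCols V) (hW : orthCols W) :
    (∀ lam mu nu,
      tmul (fun a i => U i a) (fun b j => V j b) (fun c k => W k c) A lam mu nu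
        = tri A (fun i => U i lam) (fun j => V j mu) (fun k => W k nu)) ∧
    (∀ S' : Fin p → Fin q → Fin r → ℝ,
      fro (fun i j k => A i j k -
          tmul U V W (tmul (fun a i => U i a) (fun b j => V j b) (fun c k => W k c) A) i j k)
        ≤ fro (fun i j k => A i j k - tmul U V W S' i j k)) ∧
    (∀ S' : Fin p → Fin q → Fin r → ℝ,
      fro (fun i j k => A i j k - tmul U V W S' i j k)
        = fro (fun i j k => A i j k -
            tmul U V W (tmul (fun a i => U i a) (fun b j => V j b) (fun c k => W k c) A) i j k)
      → S' = tmul (fun a i => U i a) (fun b j => V j b) (fun c k => W k c) A) := by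
  refine ⟨?_, ?_, ?_⟩
  · intro lam mu nu
    simp only [tmul, tri]
    exact Finset.sum_congr rfl fun a _ => Finset.sum_congr rfl fun b _ =>
      Finset.sum_congr rfl fun c _ => by ring
  · intro S'
    apply Real.sqrt_le_sqrt
    rw [key_identity U V W hU hV hW A S']
    have := Finset.sum_nonneg
      (fun (y : Fin p × Fin q × Fin r) (_ : y ∈ Finset.univ) =>
        sq_nonneg (S' y.1 y.2.1 y.2.2 -
          tmul (fun a i => U i a) (fun b j => V j b) (fun c k => W k c) A y.1 y.2.1 y.2.2))
    linarith
  · intro S' hfro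
    have h2 : fro2 (fun i j k => A i j k - tmul U V W S' i j k)
        = fro2 (fun i j k => A i j k -
            tmul U V W (tmul (fun a i => U i a) (fun b j => V j b) (fun c k => W k c) A) i j k) := by
      have := congrArg (fun t => t ^ 2) hfro
      simpa [fro, Real.sq_sqrt (fro2_nonneg _)] using this
    rw [key_identity U V W hU hV hW A S'] at h2
    have hzero : ∑ y : Fin p × Fin q × Fin r,
        (S' y.1 y.2.1 y.2.2 -
          tmul (fun a i => U i a) (fun b j => V j b) (fun c k => W k c) A
            y.1 y.2.1 y.2.2) ^ 2 = 0 := by linarith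
    have hall := (Finset.sum_eq_zero_iff_of_nonneg
      (fun y _ => sq_nonneg _)).mp hzero
    funext a b c
    have := hall (a, b, c) (Finset.mem_univ _)
    have := pow_eq_zero_iff (n := 2) (by norm_num) |>.mp this
    linarith [this]
end
end

section
/- Let A ∈ ℝ^{l×m×n} be a nonnegative tensor. Then the best rank-(1,1,1) approximation problem min_{u,v,w unit vectors, τ ∈ ℝ} ‖A − τ·(u⊗v⊗w)‖ has a solution (u,v,w) with all three vectors entrywise nonnegative. Equivalently, the maximum of |A·(x,y,z)| over unit vectors x,y,z is attained at nonnegative vectors. -/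
set_option maxHeartbeats 800000


open scoped BigOperators
open Sum

noncomputable section

lemma sphere_compact {ι : Type*} [Fintype ι] :
    IsCompact {x : ι → ℝ | ∑ i, x i ^ 2 = 1} := by
  apply Metric.isCompact_of_isClosed_isBounded
  · exact isClosed_eq (by fun_prop) continuous_const
  · refine (Metric.isBounded_closedBall (x := (0 : ι → ℝ)) (r := 1)).subset ?_
    intro x hx
    simp only [Metric.mem_closedBall, dist_zero_right]
    refine pi_norm_le_iff_of_nonneg zero_le_one |>.mpr fun i => ?_
    have h1 : x i ^ 2 ≤ 1 := hx ▸ Finset.single_le_sum (f := fun i => x i ^ 2)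
      (fun i _ => sq_nonneg _) (Finset.mem_univ i)
    rw [Real.norm_eq_abs]
    nlinarith [abs_nonneg (x i), sq_abs (x i)]

lemma tri_cont {ι₁ ι₂ ι₃ : Type*} [Fintype ι₁] [Fintype ι₂] [Fintype ι₃]
    (A : ι₁ → ι₂ → ι₃ → ℝ) :
    Continuous fun p : (ι₁ → ℝ) × (ι₂ → ℝ) × (ι₃ → ℝ) => tri A p.1 p.2.1 p.2.2 := by
  unfold tri; fun_prop

lemma single_unit {ι : Type*} [Fintype ι] [DecidableEq ι] (i₀ : ι) :
    unitVec (fun i => if i = i₀ then (1:ℝ) else 0) := by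
  unfold unitVec
  rw [Finset.sum_eq_single i₀] <;> simp (config := {contextual := true})

lemma abs_tri_le {ι₁ ι₂ ι₃ : Type*} [Fintype ι₁] [Fintype ι₂] [Fintype ι₃]
    (A : ι₁ → ι₂ → ι₃ → ℝ) (hA : ∀ i j k, 0 ≤ A i j k)
    (x : ι₁ → ℝ) (y : ι₂ → ℝ) (z : ι₃ → ℝ) :
    |tri A x y z| ≤ tri A (fun i => |x i|) (fun j => |y j|) (fun k => |z k|) := by
  have key : tri A (fun i => |x i|) (fun j => |y j|) (fun k => |z k|)
      = ∑ i, ∑ j, ∑ k, |A i j k * x i * y j * z k| := by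
    unfold tri
    refine Finset.sum_congr rfl fun i _ => Finset.sum_congr rfl fun j _ =>
      Finset.sum_congr rfl fun k _ => ?_
    show A i j k * |x i| * |y j| * |z k| = _
    rw [abs_mul, abs_mul, abs_mul, abs_of_nonneg (hA i j k)]
  rw [key]
  unfold tri
  refine (Finset.abs_sum_le_sum_abs _ _).trans (Finset.sum_le_sum fun i _ => ?_)
  refine (Finset.abs_sum_le_sum_abs _ _).trans (Finset.sum_le_sum fun j _ => ?_)
  exact Finset.abs_sum_le_sum_abs _ _

/-- a nonnegative tensor has a nonnegative best rank-(1,1,1) approximation: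
the maximum of `|A·(x,y,z)|` over unit vectors is attained at nonnegative unit vectors. -/
theorem stmt_2 {l m n : ℕ} (hl : 0 < l) (hm : 0 < m) (hn : 0 < n)
    (A : Fin l → Fin m → Fin n → ℝ) (hA : ∀ i j k, 0 ≤ A i j k) :
    ∃ (u : Fin l → ℝ) (v : Fin m → ℝ) (w : Fin n → ℝ),
      unitVec u ∧ unitVec v ∧ unitVec w ∧
      (∀ i, 0 ≤ u i) ∧ (∀ j, 0 ≤ v j) ∧ (∀ k, 0 ≤ w k) ∧
      ∀ (x : Fin l → ℝ) (y : Fin m → ℝ) (z : Fin n → ℝ),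
        unitVec x → unitVec y → unitVec z → |tri A x y z| ≤ tri A u v w := by
  classical
  set S : Set ((Fin l → ℝ) × (Fin m → ℝ) × (Fin n → ℝ)) :=
    {x : Fin l → ℝ | ∑ i, x i ^ 2 = 1} ×ˢ
      ({y : Fin m → ℝ | ∑ i, y i ^ 2 = 1} ×ˢ {z : Fin n → ℝ | ∑ i, z i ^ 2 = 1}) with hS
  have hcomp : IsCompact S := sphere_compact.prod (sphere_compact.prod sphere_compact)
  have hne : S.Nonempty := by
    refine ⟨⟨fun i => if i = ⟨0, hl⟩ then 1 else 0,
      fun i => if i = ⟨0, hm⟩ then 1 else 0, fun i => if i = ⟨0, hn⟩ then 1 else 0⟩, ?_⟩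
    exact ⟨single_unit _, single_unit _, single_unit _⟩
  obtain ⟨p₀, hp₀S, hp₀⟩ := hcomp.exists_isMaxOn hne
    ((continuous_abs.comp (tri_cont A)).continuousOn)
  rw [isMaxOn_iff] at hp₀
  obtain ⟨x₀, y₀, z₀⟩ := p₀
  obtain ⟨hx₀, hy₀, hz₀⟩ := hp₀S
  refine ⟨fun i => |x₀ i|, fun j => |y₀ j|, fun k => |z₀ k|, ?_, ?_, ?_,
    fun i => abs_nonneg _, fun j => abs_nonneg _, fun k => abs_nonneg _, ?_⟩
  · unfold unitVec; simpa [sq_abs] using hx₀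
  · unfold unitVec; simpa [sq_abs] using hy₀
  · unfold unitVec; simpa [sq_abs] using hz₀
  · intro x y z hx hy hz
    have hmem : (x, y, z) ∈ S := ⟨hx, hy, hz⟩
    have h1 : |tri A x y z| ≤ |tri A x₀ y₀ z₀| := hp₀ (x, y, z) hmem
    have h2 := abs_tri_le A hA x₀ y₀ z₀
    have h3 : tri A (fun i => |x₀ i|) (fun j => |y₀ j|) (fun k => |z₀ k|) ≥ tri A x₀ y₀ z₀ :=
      le_trans (le_abs_self _) h2
    linarith [abs_nonneg (tri A x₀ y₀ z₀), le_abs_self (tri A x₀ y₀ z₀)]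
end
end

section
/- Let U ∈ ℝ^{m×2} with m > 2 satisfy UᵀU = I₂, let A ∈ ℝ^{2×2} be symmetric, and set Z = U A Uᵀ, partitioned into blocks Z = [Z₁₁ Z₁₂; Z₁₂ᵀ Z₂₂] with Z₁₂ ∈ ℝ^{m₁×m₂}, m₁ + m₂ = m, with rows of U partitioned accordingly as U = [X; Y] with X ∈ ℝ^{m₁×2}, Y ∈ ℝ^{m₂×2}. Then Z₁₂ = 0 and rank(Z) = 2 if and only if, after right-multiplication of U by a suitable 2×2 orthogonal matrix Q (and replacing A by QᵀAQ), one of the following holds: (i) U = [u₁ 0; 0 u₂] (block-diagonal structure), A is diagonal with both diagonal entries nonzero; (ii) the bottom block of U is zero and rank(A) = 2; (iii) the top block of U is zero and rank(A) = 2. -/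
open scoped BigOperators
open Sum

noncomputable section

open Matrix

lemma aux_rank_sandwich {m : Type*} [Fintype m] (U : Matrix m (Fin 2) ℝ)
    (hU : Uᵀ * U = 1) (A : Matrix (Fin 2) (Fin 2) ℝ) :
    (U * A * Uᵀ).rank = A.rank := by
  refine le_antisymm ((rank_mul_le_left _ _).trans (rank_mul_le_right _ _)) ?_
  have h : Uᵀ * (U * A * Uᵀ) * U = A := by
    rw [show Uᵀ * (U * A * Uᵀ) * U = Uᵀ * U * (A * (Uᵀ * U)) by
      simp only [Matrix.mul_assoc], hU, one_mul, mul_one]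
  calc A.rank = (Uᵀ * (U * A * Uᵀ) * U).rank := by rw [h]
    _ ≤ _ := (rank_mul_le_left _ _).trans (rank_mul_le_right _ _)

lemma aux_rank2_iff (A : Matrix (Fin 2) (Fin 2) ℝ) : A.rank = 2 ↔ A.det ≠ 0 := by
  constructor
  · intro h hdet
    obtain ⟨v, hv, hAv⟩ := (Matrix.exists_mulVec_eq_zero_iff (M := A)).mpr hdet
    have hker : v ∈ LinearMap.ker A.mulVecLin := by simpa [Matrix.mulVecLin_apply] using hAv
    have h1 : 1 ≤ Module.finrank ℝ (LinearMap.ker A.mulVecLin) := by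
      have : LinearMap.ker A.mulVecLin ≠ ⊥ := fun hbot => hv (by simpa [hbot] using hker)
      exact Submodule.one_le_finrank_iff.mpr this
    have h2 := LinearMap.finrank_range_add_finrank_ker A.mulVecLin
    simp only [Module.finrank_fin_fun] at h2
    have : A.rank + 1 ≤ 2 := by unfold Matrix.rank; omega
    omega
  · intro hdet
    have := A.rank_of_isUnit ((A.isUnit_iff_isUnit_det).mpr (isUnit_iff_ne_zero.mpr hdet))
    simpa using this

lemma aux_entry {m : Type*} [Fintype m] (M : Matrix m (Fin 2) ℝ)
    (B : Matrix (Fin 2) (Fin 2) ℝ) (x y : m) :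
    (M * B * Mᵀ) x y = M x 0 * (B 0 0 * M y 0 + B 0 1 * M y 1)
      + M x 1 * (B 1 0 * M y 0 + B 1 1 * M y 1) := by
  simp [Matrix.mul_apply, Matrix.transpose_apply, Fin.sum_univ_two]
  ring

lemma aux_sum_mul {ι : Type*} [Fintype ι] (f g : ι → ℝ) (c : ℝ)
    (h : ∀ i, f i = g i * c) : (∑ i, f i) = (∑ i, g i) * c := by
  rw [Finset.sum_mul]; exact Finset.sum_congr rfl fun i _ => h i

lemma aux_sum_mul2 {ι : Type*} [Fintype ι] (f g : ι → ℝ) (c e : ℝ)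
    (h : ∀ i, f i * c = g i * e) : (∑ i, f i) * c = (∑ i, g i) * e := by
  rw [Finset.sum_mul, Finset.sum_mul]; exact Finset.sum_congr rfl fun i _ => h i

lemma aux_Qorth (b0 b1 : ℝ) (hb : b0 ^ 2 + b1 ^ 2 = 1) :
    !![-b1, b0; b0, b1] ∈ Matrix.orthogonalGroup (Fin 2) ℝ := by
  rw [Matrix.mem_orthogonalGroup_iff]
  ext i j
  fin_cases i <;> fin_cases j <;>
    simp [Matrix.mul_apply, Fin.sum_univ_two, Matrix.star_apply, Matrix.one_apply]
  · show b1*b1 + b0*b0 = (1:ℝ)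
    linear_combination hb
  · show -(b1*b0) + b0*b1 = (0:ℝ)
    ring
  · show -(b0*b1) + b1*b0 = (0:ℝ)
    ring
  · show b0*b0 + b1*b1 = (1:ℝ)
    linear_combination hb

/-- characterization of `Z = U A Uᵀ` (with `UᵀU = I₂`, `A` symmetric 2×2)
having zero off-diagonal block and rank 2, in terms of the three structures up to an
orthogonal transformation `Q`. -/
theorem stmt_4 {m₁ m₂ : ℕ} (hm : 2 < m₁ + m₂)
    (U : Matrix (Fin m₁ ⊕ Fin m₂) (Fin 2) ℝ) (hU : Uᵀ * U = 1)
    (A : Matrix (Fin 2) (Fin 2) ℝ) (hA : A.IsSymm) :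
    ((∀ i j, (U * A * Uᵀ) (inl i) (inr j) = 0) ∧ (U * A * Uᵀ).rank = 2) ↔
    ∃ Q ∈ Matrix.orthogonalGroup (Fin 2) ℝ,
      (((∀ i, (U * Q) (inl i) 1 = 0) ∧ (∀ j, (U * Q) (inr j) 0 = 0) ∧
        (Qᵀ * A * Q) 0 1 = 0 ∧ (Qᵀ * A * Q) 1 0 = 0 ∧
        (Qᵀ * A * Q) 0 0 ≠ 0 ∧ (Qᵀ * A * Q) 1 1 ≠ 0) ∨
      ((∀ j a, (U * Q) (inr j) a = 0) ∧ A.rank = 2) ∨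
      ((∀ i a, (U * Q) (inl i) a = 0) ∧ A.rank = 2)) := by
  have hAsEq : A 1 0 = A 0 1 := hA.apply 0 1
  constructor
  · rintro ⟨hZ, hrank⟩
    have hA2 : A.rank = 2 := by rw [← aux_rank_sandwich U hU A]; exact hrank
    have hdet : A.det ≠ 0 := (aux_rank2_iff A).mp hA2
    have hd : A 0 0 * A 1 1 - A 0 1 * A 1 0 ≠ 0 := by
      rw [Matrix.det_fin_two] at hdet; intro h; exact hdet (by linarith)
    have hZc : ∀ i j, U (inl i) 0 * (A 0 0 * U (inr j) 0 + A 0 1 * U (inr j) 1)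
        + U (inl i) 1 * (A 1 0 * U (inr j) 0 + A 1 1 * U (inr j) 1) = 0 := by
      intro i j
      have h := hZ i j
      rw [aux_entry] at h
      exact h
    by_cases hY0 : ∀ j a, U (inr j) a = 0
    · refine ⟨1, one_mem _, Or.inr (Or.inl ⟨fun j a => ?_, hA2⟩)⟩
      rw [Matrix.mul_one]; exact hY0 j a
    by_cases hX0 : ∀ i a, U (inl i) a = 0
    · refine ⟨1, one_mem _, Or.inr (Or.inr ⟨fun i a => ?_, hA2⟩)⟩
      rw [Matrix.mul_one]; exact hX0 i a
    push_neg at hY0 hX0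
    obtain ⟨j₀, a₀, ha₀⟩ := hY0
    obtain ⟨i₀, a₁, ha₁⟩ := hX0
    -- the vector w = A * (row j₀ of Y)
    obtain ⟨w0, hw0⟩ : ∃ x : ℝ, x = A 0 0 * U (inr j₀) 0 + A 0 1 * U (inr j₀) 1 := ⟨_, rfl⟩
    obtain ⟨w1, hw1⟩ : ∃ x : ℝ, x = A 1 0 * U (inr j₀) 0 + A 1 1 * U (inr j₀) 1 := ⟨_, rfl⟩
    have hwne : ¬ (w0 = 0 ∧ w1 = 0) := by
      rintro ⟨h0, h1⟩
      have k0 : A 0 0 * U (inr j₀) 0 + A 0 1 * U (inr j₀) 1 = 0 := by rw [← hw0]; exact h0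
      have k1 : A 1 0 * U (inr j₀) 0 + A 1 1 * U (inr j₀) 1 = 0 := by rw [← hw1]; exact h1
      have z0 : U (inr j₀) 0 = 0 := by
        apply mul_left_cancel₀ hd
        linear_combination A 1 1 * k0 - A 0 1 * k1
      have z1 : U (inr j₀) 1 = 0 := by
        apply mul_left_cancel₀ hd
        linear_combination A 0 0 * k1 - A 1 0 * k0
      fin_cases a₀
      · exact ha₀ z0
      · exact ha₀ z1
    have hwpos : 0 < w0 * w0 + w1 * w1 := by
      rcases not_and_or.mp hwne with h | h <;>
        nlinarith [mul_self_nonneg w0, mul_self_nonneg w1, mul_self_pos.mpr h]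
    set n : ℝ := Real.sqrt (w0 * w0 + w1 * w1) with hn_def
    have hn : 0 < n := Real.sqrt_pos.mpr hwpos
    have hnn : n ≠ 0 := ne_of_gt hn
    have hn2 : n * n = w0 * w0 + w1 * w1 := Real.mul_self_sqrt hwpos.le
    obtain ⟨b0, hb0⟩ : ∃ x : ℝ, x = w0 / n := ⟨_, rfl⟩
    obtain ⟨b1, hb1⟩ : ∃ x : ℝ, x = w1 / n := ⟨_, rfl⟩
    have hb : b0 ^ 2 + b1 ^ 2 = 1 := by
      rw [hb0, hb1]
      field_simp
      linear_combination -hn2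
    have hXb : ∀ i, U (inl i) 0 * b0 + U (inl i) 1 * b1 = 0 := by
      intro i
      rw [hb0, hb1]
      have h := hZc i j₀
      field_simp
      linear_combination hZc i j₀ + U (inl i) 0 * hw0 + U (inl i) 1 * hw1
    -- rows of X are multiples of q₁ = (-b1, b0)
    obtain ⟨s, hs⟩ : ∃ s : Fin m₁ → ℝ, ∀ i, s i = U (inl i) 1 * b0 - U (inl i) 0 * b1 :=
      ⟨_, fun _ => rfl⟩
    have hX0eq : ∀ i, U (inl i) 0 = -(s i) * b1 := by
      intro i
      linear_combination b0 * hXb i - U (inl i) 0 * hb + b1 * hs i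
    have hX1eq : ∀ i, U (inl i) 1 = s i * b0 := by
      intro i
      linear_combination b1 * hXb i - U (inl i) 1 * hb - b0 * hs i
    have hs₀ : s i₀ ≠ 0 := by
      intro h
      have h0 := hX0eq i₀
      have h1 := hX1eq i₀
      rw [h] at h0 h1
      simp only [neg_zero, zero_mul] at h0 h1
      fin_cases a₁
      · exact ha₁ h0
      · exact ha₁ h1
    -- each A * (row of Y) is orthogonal to q₁
    have hq1AY : ∀ j, (-b1) * (A 0 0 * U (inr j) 0 + A 0 1 * U (inr j) 1)
        + b0 * (A 1 0 * U (inr j) 0 + A 1 1 * U (inr j) 1) = 0 := by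
      intro j
      have h := hZc i₀ j
      rw [hX0eq i₀, hX1eq i₀] at h
      apply mul_left_cancel₀ hs₀
      linear_combination h
    obtain ⟨u, hu⟩ : ∃ u : Fin m₂ → ℝ, ∀ j,
        u j = b0 * (A 0 0 * U (inr j) 0 + A 0 1 * U (inr j) 1)
            + b1 * (A 1 0 * U (inr j) 0 + A 1 1 * U (inr j) 1) := ⟨_, fun _ => rfl⟩
    have hAY0 : ∀ j, A 0 0 * U (inr j) 0 + A 0 1 * U (inr j) 1 = u j * b0 := by
      intro j
      linear_combination (-b1) * hq1AY j
        - (A 0 0 * U (inr j) 0 + A 0 1 * U (inr j) 1) * hb - b0 * hu j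
    have hAY1 : ∀ j, A 1 0 * U (inr j) 0 + A 1 1 * U (inr j) 1 = u j * b1 := by
      intro j
      linear_combination b0 * hq1AY j
        - (A 1 0 * U (inr j) 0 + A 1 1 * U (inr j) 1) * hb - b1 * hu j
    have hYeq0 : ∀ j, (A 0 0 * A 1 1 - A 0 1 * A 1 0) * U (inr j) 0
        = u j * (A 1 1 * b0 - A 0 1 * b1) := by
      intro j
      linear_combination A 1 1 * hAY0 j - A 0 1 * hAY1 j
    have hYeq1 : ∀ j, (A 0 0 * A 1 1 - A 0 1 * A 1 0) * U (inr j) 1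
        = u j * (A 0 0 * b1 - A 1 0 * b0) := by
      intro j
      linear_combination A 0 0 * hAY1 j - A 1 0 * hAY0 j
    -- orthonormality equations
    have hUc : ∀ a b : Fin 2, (∑ i, U (inl i) a * U (inl i) b)
        + (∑ j, U (inr j) a * U (inr j) b) = if a = b then (1:ℝ) else 0 := by
      intro a b
      have h := congrFun (congrFun hU a) b
      rw [Matrix.mul_apply] at h
      simp only [Matrix.transpose_apply] at h
      rw [Fintype.sum_sum_type] at h
      simpa [Matrix.one_apply] using h
    have hU00 : (∑ i, U (inl i) 0 * U (inl i) 0) + (∑ j, U (inr j) 0 * U (inr j) 0) = 1 := by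
      simpa using hUc 0 0
    have hU01 : (∑ i, U (inl i) 0 * U (inl i) 1) + (∑ j, U (inr j) 0 * U (inr j) 1) = 0 := by
      simpa using hUc 0 1
    have hU11 : (∑ i, U (inl i) 1 * U (inl i) 1) + (∑ j, U (inr j) 1 * U (inr j) 1) = 1 := by
      simpa using hUc 1 1
    have sumX00 : (∑ i, U (inl i) 0 * U (inl i) 0) = (∑ i, s i * s i) * (b1 * b1) :=
      aux_sum_mul _ _ _ (fun i => by rw [hX0eq i]; ring)
    have sumX01 : (∑ i, U (inl i) 0 * U (inl i) 1) = (∑ i, s i * s i) * (-(b0 * b1)) :=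
      aux_sum_mul _ _ _ (fun i => by rw [hX0eq i, hX1eq i]; ring)
    have sumX11 : (∑ i, U (inl i) 1 * U (inl i) 1) = (∑ i, s i * s i) * (b0 * b0) :=
      aux_sum_mul _ _ _ (fun i => by rw [hX1eq i]; ring)
    have eY00 : (∑ j, U (inr j) 0 * U (inr j) 0) * ((A 0 0 * A 1 1 - A 0 1 * A 1 0) * (A 0 0 * A 1 1 - A 0 1 * A 1 0))
        = (∑ j, u j * u j) * ((A 1 1 * b0 - A 0 1 * b1) * (A 1 1 * b0 - A 0 1 * b1)) :=
      aux_sum_mul2 _ _ _ _ (fun j => by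
        linear_combination ((A 0 0 * A 1 1 - A 0 1 * A 1 0) * U (inr j) 0
          + u j * (A 1 1 * b0 - A 0 1 * b1)) * hYeq0 j)
    have eY01 : (∑ j, U (inr j) 0 * U (inr j) 1) * ((A 0 0 * A 1 1 - A 0 1 * A 1 0) * (A 0 0 * A 1 1 - A 0 1 * A 1 0))
        = (∑ j, u j * u j) * ((A 1 1 * b0 - A 0 1 * b1) * (A 0 0 * b1 - A 1 0 * b0)) :=
      aux_sum_mul2 _ _ _ _ (fun j => by
        linear_combination (A 0 0 * A 1 1 - A 0 1 * A 1 0) * U (inr j) 1 * hYeq0 j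
          + u j * (A 1 1 * b0 - A 0 1 * b1) * hYeq1 j)
    have eY11 : (∑ j, U (inr j) 1 * U (inr j) 1) * ((A 0 0 * A 1 1 - A 0 1 * A 1 0) * (A 0 0 * A 1 1 - A 0 1 * A 1 0))
        = (∑ j, u j * u j) * ((A 0 0 * b1 - A 1 0 * b0) * (A 0 0 * b1 - A 1 0 * b0)) :=
      aux_sum_mul2 _ _ _ _ (fun j => by
        linear_combination ((A 0 0 * A 1 1 - A 0 1 * A 1 0) * U (inr j) 1
          + u j * (A 0 0 * b1 - A 1 0 * b0)) * hYeq1 j)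
    have eq1 : (A 0 0 * A 1 1 - A 0 1 * A 1 0)^2 * ((∑ i, s i * s i) * (b1 * b1))
        + (∑ j, u j * u j) * ((A 1 1 * b0 - A 0 1 * b1) * (A 1 1 * b0 - A 0 1 * b1))
        = (A 0 0 * A 1 1 - A 0 1 * A 1 0)^2 := by
      linear_combination (A 0 0 * A 1 1 - A 0 1 * A 1 0)^2 * hU00
        - (A 0 0 * A 1 1 - A 0 1 * A 1 0)^2 * sumX00 - eY00
    have eq2 : (A 0 0 * A 1 1 - A 0 1 * A 1 0)^2 * ((∑ i, s i * s i) * (b0 * b1))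
        = (∑ j, u j * u j) * ((A 1 1 * b0 - A 0 1 * b1) * (A 0 0 * b1 - A 1 0 * b0)) := by
      linear_combination (-(A 0 0 * A 1 1 - A 0 1 * A 1 0)^2) * hU01
        + (A 0 0 * A 1 1 - A 0 1 * A 1 0)^2 * sumX01 + eY01
    have eq3 : (A 0 0 * A 1 1 - A 0 1 * A 1 0)^2 * ((∑ i, s i * s i) * (b0 * b0))
        + (∑ j, u j * u j) * ((A 0 0 * b1 - A 1 0 * b0) * (A 0 0 * b1 - A 1 0 * b0))
        = (A 0 0 * A 1 1 - A 0 1 * A 1 0)^2 := by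
      linear_combination (A 0 0 * A 1 1 - A 0 1 * A 1 0)^2 * hU11
        - (A 0 0 * A 1 1 - A 0 1 * A 1 0)^2 * sumX11 - eY11
    obtain ⟨c, hc⟩ : ∃ c : ℝ, c = (∑ j, u j * u j)
        * ((A 1 1 * b0 - A 0 1 * b1) * b0 + (A 0 0 * b1 - A 1 0 * b0) * b1) := ⟨_, rfl⟩
    have hc0 : c * (A 1 1 * b0 - A 0 1 * b1) = (A 0 0 * A 1 1 - A 0 1 * A 1 0)^2 * b0 := by
      linear_combination b0 * eq1 - b1 * eq2 + (A 1 1 * b0 - A 0 1 * b1) * hc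
    have hc1 : c * (A 0 0 * b1 - A 1 0 * b0) = (A 0 0 * A 1 1 - A 0 1 * A 1 0)^2 * b1 := by
      linear_combination b1 * eq3 - b0 * eq2 + (A 0 0 * b1 - A 1 0 * b0) * hc
    have hd2 : (A 0 0 * A 1 1 - A 0 1 * A 1 0)^2 ≠ 0 := pow_ne_zero 2 hd
    have hcne : c ≠ 0 := by
      intro h
      have e0 : (A 0 0 * A 1 1 - A 0 1 * A 1 0)^2 * b0 = 0 := by
        linear_combination (A 1 1 * b0 - A 0 1 * b1) * h - hc0
      have e1 : (A 0 0 * A 1 1 - A 0 1 * A 1 0)^2 * b1 = 0 := by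
        linear_combination (A 0 0 * b1 - A 1 0 * b0) * h - hc1
      have b0z : b0 = 0 := by
        rcases mul_eq_zero.mp e0 with h' | h'
        · exact absurd h' hd2
        · exact h'
      have b1z : b1 = 0 := by
        rcases mul_eq_zero.mp e1 with h' | h'
        · exact absurd h' hd2
        · exact h'
      rw [b0z, b1z] at hb
      norm_num at hb
    have hE0 : (A 0 0 * A 1 1 - A 0 1 * A 1 0) * (A 0 0 * b0 + A 0 1 * b1) = c * b0 := by
      apply mul_left_cancel₀ hd
      linear_combination (-(A 0 0)) * hc0 - A 0 1 * hc1
    have hE1 : (A 0 0 * A 1 1 - A 0 1 * A 1 0) * (A 0 1 * b0 + A 1 1 * b1) = c * b1 := by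
      apply mul_left_cancel₀ hd
      linear_combination (-(A 1 0)) * hc0 - A 1 1 * hc1
        - ((A 0 0 * A 1 1 - A 0 1 * A 1 0)^2 * b0) * hAsEq
    -- the orthogonal matrix Q
    refine ⟨!![-b1, b0; b0, b1], ?_, Or.inl ⟨?_, ?_, ?_, ?_, ?_, ?_⟩⟩
    · exact aux_Qorth b0 b1 hb
    · intro i
      have h : (U * !![-b1, b0; b0, b1]) (inl i) 1
          = U (inl i) 0 * b0 + U (inl i) 1 * b1 := by
        simp [Matrix.mul_apply, Fin.sum_univ_two]
      rw [h]; exact hXb i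
    · intro j
      have h : (U * !![-b1, b0; b0, b1]) (inr j) 0
          = U (inr j) 0 * (-b1) + U (inr j) 1 * b0 := by
        simp [Matrix.mul_apply, Fin.sum_univ_two]
      rw [h]
      have key2 : c * ((A 0 0 * A 1 1 - A 0 1 * A 1 0)
          * (U (inr j) 0 * (-b1) + U (inr j) 1 * b0)) = 0 := by
        linear_combination (-(c * b1)) * hYeq0 j + (c * b0) * hYeq1 j
          - (u j * b1) * hc0 + (u j * b0) * hc1
      rcases mul_eq_zero.mp key2 with h' | h'
      · exact absurd h' hcne
      rcases mul_eq_zero.mp h' with h'' | h''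
      · exact absurd h'' hd
      · exact h''
    · have ent : (!![-b1, b0; b0, b1]ᵀ * A * !![-b1, b0; b0, b1]) 0 1
          = (-b1) * (A 0 0 * b0 + A 0 1 * b1) + b0 * (A 1 0 * b0 + A 1 1 * b1) := by
        simp [Matrix.mul_apply, Fin.sum_univ_two, Matrix.transpose_apply,
          Matrix.vecHead, Matrix.vecTail]
        try ring
      rw [ent]
      have key : (A 0 0 * A 1 1 - A 0 1 * A 1 0) * ((-b1) * (A 0 0 * b0 + A 0 1 * b1)
          + b0 * (A 1 0 * b0 + A 1 1 * b1)) = 0 := by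
        linear_combination (-b1) * hE0 + b0 * hE1
          + ((A 0 0 * A 1 1 - A 0 1 * A 1 0) * b0^2) * hAsEq
      rcases mul_eq_zero.mp key with h' | h'
      · exact absurd h' hd
      · exact h'
    · have ent : (!![-b1, b0; b0, b1]ᵀ * A * !![-b1, b0; b0, b1]) 1 0
          = b0 * (A 0 0 * (-b1) + A 0 1 * b0) + b1 * (A 1 0 * (-b1) + A 1 1 * b0) := by
        simp [Matrix.mul_apply, Fin.sum_univ_two, Matrix.transpose_apply,
          Matrix.vecHead, Matrix.vecTail]
        try ring
      rw [ent]
      have key : (A 0 0 * A 1 1 - A 0 1 * A 1 0) * (b0 * (A 0 0 * (-b1) + A 0 1 * b0)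
          + b1 * (A 1 0 * (-b1) + A 1 1 * b0)) = 0 := by
        linear_combination (-b1) * hE0 + b0 * hE1
          + ((A 0 0 * A 1 1 - A 0 1 * A 1 0) * b0^2
            - (A 0 0 * A 1 1 - A 0 1 * A 1 0) * (b0^2 + b1^2)) * hAsEq
      rcases mul_eq_zero.mp key with h' | h'
      · exact absurd h' hd
      · exact h'
    · have ent : (!![-b1, b0; b0, b1]ᵀ * A * !![-b1, b0; b0, b1]) 0 0
          = A 0 0 * (b1 * b1) - A 0 1 * (b0 * b1) - A 1 0 * (b0 * b1) + A 1 1 * (b0 * b0) := by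
        simp [Matrix.mul_apply, Fin.sum_univ_two, Matrix.transpose_apply,
          Matrix.vecHead, Matrix.vecTail]
        try ring
      rw [ent]
      intro hcon
      have key00 : (A 0 0 * (b1 * b1) - A 0 1 * (b0 * b1) - A 1 0 * (b0 * b1)
          + A 1 1 * (b0 * b0)) * c = (A 0 0 * A 1 1 - A 0 1 * A 1 0)^2 := by
        linear_combination (-(A 0 0 * b1 - A 0 1 * b0)) * hE1
          + (-(A 1 1 * b0 - A 0 1 * b1)) * hE0
          + ((A 0 0 * A 1 1 - A 0 1 * A 1 0) * (A 0 0 * A 1 1 - A 0 1^2)) * hb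
          + ((A 0 0 * A 1 1 - A 0 1 * A 1 0) * A 0 1 - b0 * b1 * c) * hAsEq
      have : (A 0 0 * A 1 1 - A 0 1 * A 1 0)^2 = 0 := by
        linear_combination c * hcon - key00
      exact hd2 this
    · have ent : (!![-b1, b0; b0, b1]ᵀ * A * !![-b1, b0; b0, b1]) 1 1
          = b0 * (A 0 0 * b0 + A 0 1 * b1) + b1 * (A 1 0 * b0 + A 1 1 * b1) := by
        simp [Matrix.mul_apply, Fin.sum_univ_two, Matrix.transpose_apply,
          Matrix.vecHead, Matrix.vecTail]
        try ring
      rw [ent]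
      intro hcon
      have key11 : (A 0 0 * A 1 1 - A 0 1 * A 1 0) * (b0 * (A 0 0 * b0 + A 0 1 * b1)
          + b1 * (A 1 0 * b0 + A 1 1 * b1)) = c := by
        linear_combination b0 * hE0 + b1 * hE1 + c * hb
          + ((A 0 0 * A 1 1 - A 0 1 * A 1 0) * b0 * b1) * hAsEq
      apply hcne
      linear_combination (A 0 0 * A 1 1 - A 0 1 * A 1 0) * hcon - key11
  · rintro ⟨Q, hQ, hcase⟩
    have hstar : star Q = Qᵀ := by
      ext i j; simp [Matrix.star_apply]
    have hQQt : Q * Qᵀ = 1 := by rw [← hstar]; exact (Matrix.mem_orthogonalGroup_iff (Fin 2) ℝ).mp hQ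
    have hfac : U * A * Uᵀ = (U * Q) * (Qᵀ * A * Q) * (U * Q)ᵀ := by
      rw [Matrix.transpose_mul,
        show (U * Q) * (Qᵀ * A * Q) * (Qᵀ * Uᵀ)
          = U * ((Q * Qᵀ) * (A * ((Q * Qᵀ) * Uᵀ))) from by simp only [Matrix.mul_assoc],
        hQQt]
      simp [Matrix.mul_assoc]
    have hr : (U * A * Uᵀ).rank = A.rank := aux_rank_sandwich U hU A
    have hArank : A.rank = 2 := by
      rcases hcase with ⟨h1, h2, h3, h4, h5, h6⟩ | ⟨h1, h2⟩ | ⟨h1, h2⟩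
      · have hdQ : Q.det * Q.det = 1 := by
          have := congrArg Matrix.det hQQt
          rwa [Matrix.det_mul, Matrix.det_transpose, Matrix.det_one] at this
        have hdet1 : (Qᵀ * A * Q).det = A.det := by
          rw [Matrix.det_mul, Matrix.det_mul, Matrix.det_transpose]
          linear_combination A.det * hdQ
        have hdet2 : (Qᵀ * A * Q).det = (Qᵀ * A * Q) 0 0 * (Qᵀ * A * Q) 1 1 := by
          rw [Matrix.det_fin_two, h3]; ring
        refine (aux_rank2_iff A).mpr ?_
        rw [← hdet1, hdet2]
        exact mul_ne_zero h5 h6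
      · exact h2
      · exact h2
    refine ⟨?_, by rw [hr]; exact hArank⟩
    intro i j
    rw [hfac, aux_entry]
    rcases hcase with ⟨h1, h2, h3, h4, h5, h6⟩ | ⟨h1, h2⟩ | ⟨h1, h2⟩
    · rw [h1 i, h2 j, h3]; ring
    · rw [h1 j 0, h1 j 1]; ring
    · rw [h1 i 0, h1 i 1]; ring
end
end

section
/- Let A = diag(A₁, A₂) be a (1,2)-symmetric nonnegative tensor with irreducible blocks, and assume min over rank-(2,2,2) approximations of ‖A − (X,X,Z)·F‖² is strictly less than min over rank-(2,2,2) approximations of ‖A₁ − (X,X,W)·F‖² + ‖A₂‖² (and the symmetric condition with A₁, A₂ interchanged), and that the best rank-(2,2,2) approximation (U,U,W) with core F is unique. Then U = [u₁ 0; 0 u₂] is block diagonal, and every 3-slice F(:,:,ν) of the core tensor F = A·(U,U,W) is a diagonal 2×2 matrix, with F(1,1,:) = A₁·(u₁,u₁,W) and F(2,2,:) = A₂·(u₂,u₂,W). -/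
open scoped BigOperators
open Sum

noncomputable section

/-- A (1,2)-symmetric tensor is (1,2)-reducible if there are a nonempty proper
index set `I` and a nonempty set `K` of 3-mode indices with
`B i j k = B j i k = 0` for `i ∈ I`, `j ∉ I`, `k ∈ K`. -/
def Reducible12 {σ τ : Type*} (B : σ → σ → τ → ℝ) : Prop :=
  ∃ (I : Set σ) (K : Set τ), I.Nonempty ∧ I ≠ Set.univ ∧ K.Nonempty ∧
    ∀ i ∈ I, ∀ j ∉ I, ∀ k ∈ K, B i j k = 0 ∧ B j i k = 0

/-- 3-reducibility: `B i j k = 0` for all `i, j ∈ I`, `k ∈ K`. -/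
def Reducible3 {σ τ : Type*} (B : σ → σ → τ → ℝ) : Prop :=
  ∃ (I : Set σ) (K : Set τ), I.Nonempty ∧ I ≠ Set.univ ∧ K.Nonempty ∧
    ∀ i ∈ I, ∀ j ∈ I, ∀ k ∈ K, B i j k = 0

/-- Irreducible: neither (1,2)-reducible nor 3-reducible. -/
def IrreducibleTensor {σ τ : Type*} (B : σ → σ → τ → ℝ) : Prop :=
  ¬ Reducible12 B ∧ ¬ Reducible3 B

namespace Stmt9

lemma fro2_nonneg {ι₁ ι₂ ι₃ : Type*} [Fintype ι₁] [Fintype ι₂] [Fintype ι₃]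
    (A : ι₁ → ι₂ → ι₃ → ℝ) : 0 ≤ fro2 A := by
  unfold fro2; positivity

lemma sum_sq_zero {ι : Type*} [Fintype ι] {f : ι → ℝ} (h : ∑ i, f i ^ 2 = 0) :
    ∀ i, f i = 0 := by
  intro i
  have := (Finset.sum_eq_zero_iff_of_nonneg
    (fun j _ => sq_nonneg (f j))).1 h i (Finset.mem_univ i)
  exact pow_eq_zero_iff two_ne_zero |>.mp this

lemma solve2 {a b c : ℝ} (hdet : a * c - b ^ 2 ≠ 0) {m0 m1 : ℝ}
    (e1 : a * m0 + b * m1 = 0) (e2 : b * m0 + c * m1 = 0) : m0 = 0 ∧ m1 = 0 := by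
  constructor
  · have h : (a * c - b ^ 2) * m0 = 0 := by linear_combination c * e1 - b * e2
    exact (mul_eq_zero.mp h).resolve_left hdet
  · have h : (a * c - b ^ 2) * m1 = 0 := by linear_combination a * e2 - b * e1
    exact (mul_eq_zero.mp h).resolve_left hdet

lemma dsum_factor {α β : Type*} [Fintype α] [Fintype β] (f : α → ℝ) (g : β → ℝ) (c : ℝ) :
    ∑ i : α, ∑ j : β, f i * g j * c = (∑ i, f i) * (∑ j, g j) * c := by
  rw [Finset.sum_mul, Finset.sum_mul]
  refine Finset.sum_congr rfl fun i _ => ?_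
  rw [Finset.mul_sum, Finset.sum_mul]


lemma dsum_factor' {α β : Type*} [Fintype α] [Fintype β] (f : α → ℝ) (g : β → ℝ) (c : ℝ) :
    ∑ i : α, ∑ j : β, f i * (g j * c) = (∑ i, f i) * (∑ j, g j) * c := by
  rw [← dsum_factor]
  exact Finset.sum_congr rfl fun i _ => Finset.sum_congr rfl fun j _ => by ring

lemma quad_sum {τ' : Type*} [Fintype τ'] (x : τ' → Fin 2 → ℝ) (c : Fin 2 → ℝ) :
    ∑ j, (∑ a, x j a * c a) ^ 2 = ∑ a, ∑ b, c a * c b * (∑ j, x j a * x j b) := by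
  simp only [Fin.sum_univ_two, Finset.mul_sum]
  simp only [← Finset.sum_add_distrib]
  exact Finset.sum_congr rfl fun j _ => by ring

lemma card_ge_two_of_det {σ : Type*} [Fintype σ] (x y : σ → ℝ)
    (h : (∑ i, x i * x i) * (∑ i, y i * y i) - (∑ i, x i * y i) ^ 2 ≠ 0) :
    2 ≤ Fintype.card σ := by
  by_contra hc
  push_neg at hc
  apply h
  have hs : Subsingleton σ := Fintype.card_le_one_iff_subsingleton.mp (by omega)
  rcases isEmpty_or_nonempty σ with he | hne
  · simp
  · obtain ⟨d⟩ := hne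
    haveI : Unique σ := uniqueOfSubsingleton d
    simp only [Finset.univ_unique, Finset.sum_singleton]
    ring

lemma exists_orthonormal_pair {σ : Type*} [Fintype σ] [DecidableEq σ]
    (u : σ → ℝ) (hu : ∑ i, u i ^ 2 = 1) (hcard : 2 ≤ Fintype.card σ) :
    ∃ u' : σ → ℝ, ∑ i, u' i ^ 2 = 1 ∧ ∑ i, u i * u' i = 0 := by
  have key : ∃ k i, ((if i = k then (1 : ℝ) else 0) - u k * u i) ≠ 0 := by
    by_contra h
    push_neg at h
    obtain ⟨k, j, hkj⟩ := Fintype.exists_pair_of_one_lt_card (α := σ) (by omega)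
    have e1 := h k k
    have e2 := h j j
    have e3 := h k j
    rw [if_pos rfl] at e1 e2
    rw [if_neg (fun hh : j = k => hkj (hh ▸ rfl))] at e3
    nlinarith [e1, e2, e3]
  obtain ⟨k, i0, hne⟩ := key
  set v : σ → ℝ := fun i => (if i = k then (1 : ℝ) else 0) - u k * u i with hv
  have hvpos : 0 < ∑ i, v i ^ 2 := by
    apply Finset.sum_pos' (fun i _ => sq_nonneg _)
    exact ⟨i0, Finset.mem_univ i0, by positivity⟩
  have huv : ∑ i, u i * v i = 0 := by
    have : ∀ i, u i * v i = (if i = k then u i else 0) - u k * u i ^ 2 := by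
      intro i
      by_cases hik : i = k <;> simp [hv, hik] <;> ring
    rw [Finset.sum_congr rfl fun i _ => this i, Finset.sum_sub_distrib,
      Finset.sum_ite_eq' Finset.univ k u, ← Finset.mul_sum, hu]
    simp
  set r := Real.sqrt (∑ i, v i ^ 2) with hrdef
  have hr : 0 < r := Real.sqrt_pos.mpr hvpos
  have hr2 : r ^ 2 = ∑ i, v i ^ 2 := Real.sq_sqrt hvpos.le
  refine ⟨fun i => v i / r, ?_, ?_⟩
  · simp only [div_pow, ← Finset.sum_div, ← hr2]
    field_simp
  · simp only [← mul_div_assoc, ← Finset.sum_div, huv]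
    simp

lemma psd_rank1 {a b c : ℝ} (ha : 0 ≤ a) (hc : 0 ≤ c) (hdet : a * c - b ^ 2 = 0)
    (hpos : 0 < a + c) :
    ∃ (t : ℝ) (v : Fin 2 → ℝ), 0 < t ∧ v 0 ^ 2 + v 1 ^ 2 = 1 ∧
      a = t * v 0 * v 0 ∧ b = t * v 0 * v 1 ∧ c = t * v 1 * v 1 := by
  by_cases haz : a = 0
  · have hb : b = 0 := by nlinarith
    refine ⟨c, ![0, 1], by simpa [haz] using hpos, by norm_num, by simp [haz], by simp [hb],
      by simp⟩
  · have ha' : 0 < a := lt_of_le_of_ne ha (Ne.symm haz)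
    set r := Real.sqrt (a * (a + c)) with hrdef
    have hr : 0 < r := Real.sqrt_pos.mpr (by positivity)
    have hr2 : r ^ 2 = a * (a + c) := Real.sq_sqrt (by positivity)
    have hrr : r * r = a * (a + c) := by rw [← hr2]; ring
    refine ⟨a + c, ![a / r, b / r], hpos, ?_, ?_, ?_, ?_⟩
    · simp only [Matrix.cons_val_zero, Matrix.cons_val_one, Matrix.head_cons]
      rw [show (a / r) ^ 2 + (b / r) ^ 2 = (a * a + b * b) / (r * r) by ring, hrr,
        div_eq_one_iff_eq (by positivity)]
      linear_combination (-1 : ℝ) * hdet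
    · simp only [Matrix.cons_val_zero]
      rw [show (a + c) * (a / r) * (a / r) = ((a + c) * a * a) / (r * r) by ring, hrr,
        eq_div_iff (by positivity)]
      ring
    · simp only [Matrix.cons_val_zero, Matrix.cons_val_one, Matrix.head_cons]
      rw [show (a + c) * (a / r) * (b / r) = ((a + c) * a * b) / (r * r) by ring, hrr,
        eq_div_iff (by positivity)]
      ring
    · simp only [Matrix.cons_val_one, Matrix.head_cons, Matrix.cons_val_zero]
      rw [show (a + c) * (b / r) * (b / r) = ((a + c) * b * b) / (r * r) by ring, hrr,
        eq_div_iff (by positivity)]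
      linear_combination (a + c) * hdet

lemma ker2 {v0 v1 w x y z : ℝ} (N : v0 ^ 2 + v1 ^ 2 = 1)
    (E1 : w * v0 + x * v1 = 0) (E2 : y * v0 + z * v1 = 0)
    (E3 : v0 * w + v1 * y = 0) (E4 : v0 * x + v1 * z = 0) :
    w = (v1 ^ 2 * w - v0 * v1 * x - v0 * v1 * y + v0 ^ 2 * z) * v1 * v1 ∧
    x = -((v1 ^ 2 * w - v0 * v1 * x - v0 * v1 * y + v0 ^ 2 * z) * v1 * v0) ∧
    y = -((v1 ^ 2 * w - v0 * v1 * x - v0 * v1 * y + v0 ^ 2 * z) * v0 * v1) ∧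
    z = (v1 ^ 2 * w - v0 * v1 * x - v0 * v1 * y + v0 ^ 2 * z) * v0 * v0 := by
  refine ⟨?_, ?_, ?_, ?_⟩
  · linear_combination (v0 * v1 ^ 2 + v0 ^ 3) * E1 + (v0 * v1 ^ 2) * E3 +
      (-(v0 ^ 2 * v1)) * E4 + (-(w * (v0 ^ 2 + v1 ^ 2 + 1))) * N
  · linear_combination (v1 ^ 3 + v0 ^ 2 * v1) * E1 + (-(v0 ^ 2 * v1)) * E3 +
      v0 ^ 3 * E4 + (-(x * (v0 ^ 2 + v1 ^ 2 + 1))) * N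
  · linear_combination (v0 ^ 3 + v0 * v1 ^ 2) * E2 + v1 ^ 3 * E3 +
      (-(v0 * v1 ^ 2)) * E4 + (-(y * (v0 ^ 2 + v1 ^ 2 + 1))) * N
  · linear_combination (v1 * v0 ^ 2 + v1 ^ 3) * E2 + (v1 * v0 ^ 2) * E4 +
      (-(v1 ^ 2 * v0)) * E3 + (-(z * (v0 ^ 2 + v1 ^ 2 + 1))) * N

end Stmt9

namespace Stmt9

lemma endgame {σ τ ν : Type*} [Fintype σ] [Fintype τ] [Fintype ν]
    (A₁ : σ → σ → ν → ℝ) (A₂ : τ → τ → ν → ℝ)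
    (A : (σ ⊕ τ) → (σ ⊕ τ) → ν → ℝ)
    (hA1 : ∀ i j k, A (Sum.inl i) (Sum.inl j) k = A₁ i j k)
    (hA2 : ∀ i j k, A (Sum.inr i) (Sum.inr j) k = A₂ i j k)
    (hA3 : ∀ i j k, A (Sum.inl i) (Sum.inr j) k = 0)
    (hA4 : ∀ i j k, A (Sum.inr i) (Sum.inl j) k = 0)
    (U : (σ ⊕ τ) → Fin 2 → ℝ) (W : ν → Fin 2 → ℝ) (F : Fin 2 → Fin 2 → Fin 2 → ℝ)
    (hU : orthCols U) (hW : orthCols W)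
    (hmin : ∀ (X : (σ ⊕ τ) → Fin 2 → ℝ) (Z : ν → Fin 2 → ℝ)
      (H : Fin 2 → Fin 2 → Fin 2 → ℝ), orthCols X → orthCols Z →
      fro2 (fun p q k => A p q k - tmul U U W F p q k)
        ≤ fro2 (fun p q k => A p q k - tmul X X Z H p q k))
    (hcond : sInf {r : ℝ | ∃ (X : (σ ⊕ τ) → Fin 2 → ℝ) (Z : ν → Fin 2 → ℝ)
        (H : Fin 2 → Fin 2 → Fin 2 → ℝ), orthCols X ∧ orthCols Z ∧
        r = fro2 (fun p q k => A p q k - tmul X X Z H p q k)}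
      < sInf {r : ℝ | ∃ (X : σ → Fin 2 → ℝ) (Z : ν → Fin 2 → ℝ)
        (H : Fin 2 → Fin 2 → Fin 2 → ℝ), orthCols X ∧ orthCols Z ∧
        r = fro2 (fun i j k => A₁ i j k - tmul X X Z H i j k)} + fro2 A₂)
    (X : σ → Fin 2 → ℝ) (H : Fin 2 → Fin 2 → Fin 2 → ℝ) (hX : orthCols X)
    (hB1 : ∀ i j k, tmul U U W F (Sum.inl i) (Sum.inl j) k = tmul X X W H i j k)
    (hB2 : ∀ i j k, tmul U U W F (Sum.inr i) (Sum.inr j) k = 0)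
    (hB3 : ∀ i j k, tmul U U W F (Sum.inl i) (Sum.inr j) k = 0)
    (hB4 : ∀ i j k, tmul U U W F (Sum.inr i) (Sum.inl j) k = 0) : False := by
  have hlb : sInf {r : ℝ | ∃ (X : σ → Fin 2 → ℝ) (Z : ν → Fin 2 → ℝ)
      (H : Fin 2 → Fin 2 → Fin 2 → ℝ), orthCols X ∧ orthCols Z ∧
      r = fro2 (fun i j k => A₁ i j k - tmul X X Z H i j k)}
      ≤ fro2 (fun i j k => A₁ i j k - tmul X X W H i j k) := by
    apply csInf_le
    · refine ⟨0, ?_⟩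
      rintro r ⟨X', Z', H', _, _, rfl⟩
      exact fro2_nonneg _
    · exact ⟨X, W, H, hX, hW, rfl⟩
  have hsplit : fro2 (fun p q k => A p q k - tmul U U W F p q k)
      = fro2 (fun i j k => A₁ i j k - tmul X X W H i j k) + fro2 A₂ := by
    simp only [fro2, Fintype.sum_sum_type, hB1, hB2, hB3, hB4, hA1, hA2, hA3, hA4]
    simp
  have hge : fro2 (fun p q k => A p q k - tmul U U W F p q k)
      ≤ sInf {r : ℝ | ∃ (X : (σ ⊕ τ) → Fin 2 → ℝ) (Z : ν → Fin 2 → ℝ)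
        (H : Fin 2 → Fin 2 → Fin 2 → ℝ), orthCols X ∧ orthCols Z ∧
        r = fro2 (fun p q k => A p q k - tmul X X Z H p q k)} := by
    apply le_csInf
    · exact ⟨_, U, W, F, hU, hW, rfl⟩
    · rintro r ⟨X', Z', H', hX', hZ', rfl⟩
      exact hmin X' Z' H' hX' hZ'
  linarith

end Stmt9

namespace Stmt9

lemma oneSide {σ τ ν : Type*} [Fintype σ] [Fintype τ] [Fintype ν] [DecidableEq σ]
    (A₁ : σ → σ → ν → ℝ) (A₂ : τ → τ → ν → ℝ)
    (A : (σ ⊕ τ) → (σ ⊕ τ) → ν → ℝ)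
    (hA1 : ∀ i j k, A (Sum.inl i) (Sum.inl j) k = A₁ i j k)
    (hA2 : ∀ i j k, A (Sum.inr i) (Sum.inr j) k = A₂ i j k)
    (hA3 : ∀ i j k, A (Sum.inl i) (Sum.inr j) k = 0)
    (hA4 : ∀ i j k, A (Sum.inr i) (Sum.inl j) k = 0)
    (U : (σ ⊕ τ) → Fin 2 → ℝ) (W : ν → Fin 2 → ℝ) (F : Fin 2 → Fin 2 → Fin 2 → ℝ)
    (hU : orthCols U) (hW : orthCols W)
    (hmin : ∀ (X : (σ ⊕ τ) → Fin 2 → ℝ) (Z : ν → Fin 2 → ℝ)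
      (H : Fin 2 → Fin 2 → Fin 2 → ℝ), orthCols X → orthCols Z →
      fro2 (fun p q k => A p q k - tmul U U W F p q k)
        ≤ fro2 (fun p q k => A p q k - tmul X X Z H p q k))
    (hcond : sInf {r : ℝ | ∃ (X : (σ ⊕ τ) → Fin 2 → ℝ) (Z : ν → Fin 2 → ℝ)
        (H : Fin 2 → Fin 2 → Fin 2 → ℝ), orthCols X ∧ orthCols Z ∧
        r = fro2 (fun p q k => A p q k - tmul X X Z H p q k)}
      < sInf {r : ℝ | ∃ (X : σ → Fin 2 → ℝ) (Z : ν → Fin 2 → ℝ)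
        (H : Fin 2 → Fin 2 → Fin 2 → ℝ), orthCols X ∧ orthCols Z ∧
        r = fro2 (fun i j k => A₁ i j k - tmul X X Z H i j k)} + fro2 A₂)
    (hcross : ∀ i j k, tmul U U W F (Sum.inl i) (Sum.inr j) k = 0)
    (hcross' : ∀ j i k, tmul U U W F (Sum.inr j) (Sum.inl i) k = 0)
    (hd1 : (∑ i, U (Sum.inl i) 0 * U (Sum.inl i) 0) * (∑ i, U (Sum.inl i) 1 * U (Sum.inl i) 1)
        - (∑ i, U (Sum.inl i) 0 * U (Sum.inl i) 1) ^ 2 ≠ 0) :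
    False := by
  classical
  obtain ⟨s1, hs1⟩ : ∃ s : Fin 2 → Fin 2 → ℝ,
      ∀ a b, s a b = ∑ i, U (Sum.inl i) a * U (Sum.inl i) b := ⟨_, fun _ _ => rfl⟩
  obtain ⟨s2, hs2⟩ : ∃ s : Fin 2 → Fin 2 → ℝ,
      ∀ a b, s a b = ∑ j, U (Sum.inr j) a * U (Sum.inr j) b := ⟨_, fun _ _ => rfl⟩
  obtain ⟨G, hG⟩ : ∃ G : ν → Fin 2 → Fin 2 → ℝ,
      ∀ k a b, G k a b = ∑ c, W k c * F a b c := ⟨_, fun _ _ _ => rfl⟩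
  rw [← hs1 0 0, ← hs1 1 1, ← hs1 0 1] at hd1
  have hs1symm : ∀ a b, s1 a b = s1 b a := fun a b => by
    rw [hs1, hs1]; exact Finset.sum_congr rfl fun i _ => mul_comm _ _
  have hs2symm : ∀ a b, s2 a b = s2 b a := fun a b => by
    rw [hs2, hs2]; exact Finset.sum_congr rfl fun i _ => mul_comm _ _
  have hsum : ∀ a b, s1 a b + s2 a b = if a = b then (1 : ℝ) else 0 := by
    intro a b
    rw [← hU a b, hs1, hs2, Fintype.sum_sum_type]
  have hBform : ∀ p q k, tmul U U W F p q k = ∑ a, ∑ b, U p a * U q b * G k a b := by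
    intro p q k
    unfold tmul
    refine Finset.sum_congr rfl fun a _ => Finset.sum_congr rfl fun b _ => ?_
    rw [hG, Finset.mul_sum]
    exact Finset.sum_congr rfl fun c _ => by ring
  -- cross-block Gram relation, left version
  have hD : ∀ (k : ν) (a' b' a b : Fin 2),
      ∑ i, ∑ j, (U (Sum.inl i) a' * U (Sum.inl i) a) *
        ((U (Sum.inr j) b * U (Sum.inr j) b') * G k a b)
      = s1 a' a * s2 b b' * G k a b := by
    intro k a' b' a b
    rw [hs1, hs2]
    exact dsum_factor' _ _ _
  have key : ∀ (k : ν) (a' b' : Fin 2),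
      s1 a' 0 * (G k 0 0 * s2 0 b' + G k 0 1 * s2 1 b') +
      s1 a' 1 * (G k 1 0 * s2 0 b' + G k 1 1 * s2 1 b') = 0 := by
    intro k a' b'
    have h0 : ∑ i, ∑ j, (U (Sum.inl i) a' * U (Sum.inr j) b') *
        tmul U U W F (Sum.inl i) (Sum.inr j) k = 0 := by
      simp [hcross]
    have h1 : ∑ i, ∑ j, (U (Sum.inl i) a' * U (Sum.inr j) b') *
        tmul U U W F (Sum.inl i) (Sum.inr j) k
        = ∑ a, ∑ b, s1 a' a * s2 b b' * G k a b := by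
      simp only [← hD]
      simp only [Fin.sum_univ_two]
      simp only [← Finset.sum_add_distrib]
      refine Finset.sum_congr rfl fun i _ => Finset.sum_congr rfl fun j _ => ?_
      rw [hBform]
      simp only [Fin.sum_univ_two]
      ring
    rw [h1] at h0
    simp only [Fin.sum_univ_two] at h0
    linear_combination h0
  -- right version
  have key' : ∀ (k : ν) (a' b' : Fin 2),
      (s2 a' 0 * G k 0 0 + s2 a' 1 * G k 1 0) * s1 0 b' +
      (s2 a' 0 * G k 0 1 + s2 a' 1 * G k 1 1) * s1 1 b' = 0 := by
    intro k a' b'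
    have h0 : ∑ j, ∑ i, (U (Sum.inr j) a' * U (Sum.inl i) b') *
        tmul U U W F (Sum.inr j) (Sum.inl i) k = 0 := by
      simp [hcross']
    have hD' : ∀ (a b : Fin 2),
        ∑ j, ∑ i, (U (Sum.inr j) a' * U (Sum.inr j) a) *
          ((U (Sum.inl i) b * U (Sum.inl i) b') * G k a b)
        = s2 a' a * s1 b b' * G k a b := by
      intro a b
      rw [hs1, hs2]
      exact dsum_factor' _ _ _
    have h1 : ∑ j, ∑ i, (U (Sum.inr j) a' * U (Sum.inl i) b') *
        tmul U U W F (Sum.inr j) (Sum.inl i) k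
        = ∑ a, ∑ b, s2 a' a * s1 b b' * G k a b := by
      simp only [← hD']
      simp only [Fin.sum_univ_two]
      simp only [← Finset.sum_add_distrib]
      refine Finset.sum_congr rfl fun j _ => Finset.sum_congr rfl fun i _ => ?_
      rw [hBform]
      simp only [Fin.sum_univ_two]
      ring
    rw [h1] at h0
    simp only [Fin.sum_univ_two] at h0
    linear_combination h0
  -- G ⬝ s2 = 0 rows
  have hGs2 : ∀ (k : ν) (a b' : Fin 2),
      G k a 0 * s2 0 b' + G k a 1 * s2 1 b' = 0 := by
    intro k a b'
    have e1 := key k 0 b'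
    have e2 := key k 1 b'
    have e1' : s1 0 0 * (G k 0 0 * s2 0 b' + G k 0 1 * s2 1 b') +
        s1 0 1 * (G k 1 0 * s2 0 b' + G k 1 1 * s2 1 b') = 0 := e1
    rw [hs1symm 1 0] at e2
    have e2' : s1 0 1 * (G k 0 0 * s2 0 b' + G k 0 1 * s2 1 b') +
        s1 1 1 * (G k 1 0 * s2 0 b' + G k 1 1 * s2 1 b') = 0 := e2
    obtain ⟨h0, h1⟩ := solve2 hd1 e1' e2'
    fin_cases a
    · exact h0
    · exact h1
  -- s2 ⬝ G = 0 columns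
  have hs2G : ∀ (k : ν) (a' b : Fin 2),
      s2 a' 0 * G k 0 b + s2 a' 1 * G k 1 b = 0 := by
    intro k a' b
    have e1 := key' k a' 0
    have e2 := key' k a' 1
    rw [hs1symm 1 0] at e1
    have e1' : s1 0 0 * (s2 a' 0 * G k 0 0 + s2 a' 1 * G k 1 0) +
        s1 0 1 * (s2 a' 0 * G k 0 1 + s2 a' 1 * G k 1 1) = 0 := by
      linear_combination e1
    have e2' : s1 0 1 * (s2 a' 0 * G k 0 0 + s2 a' 1 * G k 1 0) +
        s1 1 1 * (s2 a' 0 * G k 0 1 + s2 a' 1 * G k 1 1) = 0 := by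
      linear_combination e2
    obtain ⟨h0, h1⟩ := solve2 hd1 e1' e2'
    fin_cases b
    · exact h0
    · exact h1
  -- case analysis on the second block
  by_cases hz : ∀ (j : τ) (a : Fin 2), U (Sum.inr j) a = 0
  · -- U supported on first block
    have hX : orthCols (fun i a => U (Sum.inl i) a) := by
      intro a b
      have := hsum a b
      rw [hs1, hs2] at this
      simpa [hz] using this
    exact endgame A₁ A₂ A hA1 hA2 hA3 hA4 U W F hU hW hmin hcond _ F hX
      (fun i j k => rfl) (fun i j k => by simp [tmul, hz])
      (fun i j k => by simp [tmul, hz]) (fun i j k => by simp [tmul, hz])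
  · push_neg at hz
    obtain ⟨j0, a0, hja0⟩ := hz
    have hd1' : (∑ i, U (Sum.inl i) 0 * U (Sum.inl i) 0) *
        (∑ i, U (Sum.inl i) 1 * U (Sum.inl i) 1)
        - (∑ i, U (Sum.inl i) 0 * U (Sum.inl i) 1) ^ 2 ≠ 0 := by
      rw [← hs1 0 0, ← hs1 1 1, ← hs1 0 1]; exact hd1
    have hcard : 2 ≤ Fintype.card σ := card_ge_two_of_det _ _ hd1'
    by_cases hd2 : s2 0 0 * s2 1 1 - s2 0 1 ^ 2 = 0
    · -- s2 has rank one
      have ha2 : 0 ≤ s2 0 0 := by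
        rw [hs2]; exact Finset.sum_nonneg fun j _ => mul_self_nonneg _
      have hc2 : 0 ≤ s2 1 1 := by
        rw [hs2]; exact Finset.sum_nonneg fun j _ => mul_self_nonneg _
      have hpos : 0 < s2 0 0 + s2 1 1 := by
        have hle : U (Sum.inr j0) a0 * U (Sum.inr j0) a0 ≤ s2 a0 a0 := by
          rw [hs2]
          exact Finset.single_le_sum (fun j _ => mul_self_nonneg (U (Sum.inr j) a0))
            (Finset.mem_univ j0)
        have hlt : 0 < U (Sum.inr j0) a0 * U (Sum.inr j0) a0 := mul_self_pos.mpr hja0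
        have hdiag : 0 < s2 a0 a0 := hlt.trans_le hle
        rcases (by decide : ∀ x : Fin 2, x = 0 ∨ x = 1) a0 with h0 | h0 <;>
          rw [h0] at hdiag <;> linarith
      obtain ⟨t, v, ht, hv, he1, he2, he3⟩ := psd_rank1 ha2 hc2 hd2 hpos
      have he2' : s2 1 0 = t * v 0 * v 1 := by rw [hs2symm 1 0]; exact he2
      -- G annihilates v on the right
      have hvne : v 0 ≠ 0 ∨ v 1 ≠ 0 := by
        by_contra hcon
        push_neg at hcon
        rw [hcon.1, hcon.2] at hv
        norm_num at hv
      have hGv : ∀ (kk : ν) (a : Fin 2), G kk a 0 * v 0 + G kk a 1 * v 1 = 0 := by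
        intro kk a
        obtain hb' | hb' := hvne
        · have h := hGs2 kk a 0
          rw [he1, he2'] at h
          have h' : t * v 0 * (G kk a 0 * v 0 + G kk a 1 * v 1) = 0 := by linear_combination h
          have := mul_eq_zero.mp h'
          rcases this with h'' | h''
          · exact absurd (mul_eq_zero.mp h'') (by push_neg; exact ⟨ne_of_gt ht, hb'⟩)
          · exact h''
        · have h := hGs2 kk a 1
          rw [he2, he3] at h
          have h' : t * v 1 * (G kk a 0 * v 0 + G kk a 1 * v 1) = 0 := by linear_combination h
          have := mul_eq_zero.mp h'
          rcases this with h'' | h''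
          · exact absurd (mul_eq_zero.mp h'') (by push_neg; exact ⟨ne_of_gt ht, hb'⟩)
          · exact h''
      have hvG : ∀ (kk : ν) (b : Fin 2), v 0 * G kk 0 b + v 1 * G kk 1 b = 0 := by
        intro kk b
        obtain ha' | ha' := hvne
        · have h := hs2G kk 0 b
          rw [he1, he2] at h
          have h' : t * v 0 * (v 0 * G kk 0 b + v 1 * G kk 1 b) = 0 := by linear_combination h
          rcases mul_eq_zero.mp h' with h'' | h''
          · exact absurd (mul_eq_zero.mp h'') (by push_neg; exact ⟨ne_of_gt ht, ha'⟩)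
          · exact h''
        · have h := hs2G kk 1 b
          rw [he2', he3] at h
          have h' : t * v 1 * (v 0 * G kk 0 b + v 1 * G kk 1 b) = 0 := by linear_combination h
          rcases mul_eq_zero.mp h' with h'' | h''
          · exact absurd (mul_eq_zero.mp h'') (by push_neg; exact ⟨ne_of_gt ht, ha'⟩)
          · exact h''
      -- rank-one structure of G
      obtain ⟨q, hq0, hq1⟩ : ∃ q : Fin 2 → ℝ, q 0 = -(v 1) ∧ q 1 = v 0 :=
        ⟨![-(v 1), v 0], rfl, rfl⟩
      obtain ⟨g, hg⟩ : ∃ g : ν → ℝ, ∀ kk, g kk = v 1 ^ 2 * G kk 0 0 - v 0 * v 1 * G kk 0 1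
          - v 0 * v 1 * G kk 1 0 + v 0 ^ 2 * G kk 1 1 := ⟨_, fun _ => rfl⟩
      have hGfac : ∀ (kk : ν) (a b : Fin 2), G kk a b = g kk * q a * q b := by
        intro kk a b
        obtain ⟨k1, k2, k3, k4⟩ := ker2 hv (hGv kk 0) (hGv kk 1) (hvG kk 0) (hvG kk 1)
        have hcase : ∀ x : Fin 2, x = 0 ∨ x = 1 := by decide
        rcases hcase a with rfl | rfl <;> rcases hcase b with rfl | rfl <;>
          simp only [hg, hq0, hq1]
        · linear_combination k1
        · linear_combination k2
        · linear_combination k3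
        · linear_combination k4
      -- vanishing of U-inr against q, and unit norm of u
      have hq2 : ∀ j, U (Sum.inr j) 0 * q 0 + U (Sum.inr j) 1 * q 1 = 0 := by
        have hq : ∑ j, (∑ a, U (Sum.inr j) a * q a) ^ 2 = 0 := by
          rw [quad_sum]
          simp only [← hs2]
          simp only [Fin.sum_univ_two, hq0, hq1, he1, he2, he2', he3]
          ring
        intro j
        have := sum_sq_zero hq j
        simpa [Fin.sum_univ_two] using this
      have hu1 : ∑ i, (∑ a, U (Sum.inl i) a * q a) ^ 2 = 1 := by
        rw [quad_sum]
        simp only [← hs1]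
        have hs1v : ∀ a b, s1 a b = (if a = b then (1 : ℝ) else 0) - s2 a b :=
          fun a b => by linarith [hsum a b]
        simp only [Fin.sum_univ_two, hs1v, he1, he2, he2', he3, hq0, hq1]
        norm_num
        linear_combination hv
      obtain ⟨u', hu'1, huu'⟩ := exists_orthonormal_pair _ hu1 hcard
      have hX : orthCols (fun i (a : Fin 2) =>
          if a = 0 then ∑ a', U (Sum.inl i) a' * q a' else u' i) := by
        intro a b
        have hcase : ∀ x : Fin 2, x = 0 ∨ x = 1 := by decide
        rcases hcase a with rfl | rfl <;> rcases hcase b with rfl | rfl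
        · simpa [pow_two] using hu1
        · simpa using huu'
        · rw [show (∑ i, (if (1 : Fin 2) = 0 then ∑ a', U (Sum.inl i) a' * q a' else u' i) *
              (if (0 : Fin 2) = 0 then ∑ a', U (Sum.inl i) a' * q a' else u' i))
            = ∑ i, (∑ a', U (Sum.inl i) a' * q a') * u' i from by
              refine Finset.sum_congr rfl fun i _ => ?_
              norm_num
              ring]
          simpa using huu'
        · simpa [pow_two] using hu'1
      have hBfac : ∀ p p' kk, tmul U U W F p p' kk
          = (∑ a, U p a * q a) * (∑ b, U p' b * q b) * g kk := by
        intro p p' kk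
        rw [hBform]
        simp only [Fin.sum_univ_two]
        rw [hGfac kk 0 0, hGfac kk 0 1, hGfac kk 1 0, hGfac kk 1 1]
        ring
      have hB1 : ∀ i i' kk, tmul U U W F (Sum.inl i) (Sum.inl i') kk
          = tmul (fun i (a : Fin 2) =>
              if a = 0 then ∑ a', U (Sum.inl i) a' * q a' else u' i)
              (fun i (a : Fin 2) =>
              if a = 0 then ∑ a', U (Sum.inl i) a' * q a' else u' i) W
              (fun a b c => if a = 0 ∧ b = 0 then ∑ a', ∑ b', q a' * q b' * F a' b' c else 0)
              i i' kk := by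
        intro i i' kk
        have hgW : g kk = W kk 0 * (∑ a', ∑ b', q a' * q b' * F a' b' 0)
            + W kk 1 * (∑ a', ∑ b', q a' * q b' * F a' b' 1) := by
          simp only [hg, hG, Fin.sum_univ_two, hq0, hq1]
          ring
        rw [hBfac, hgW]
        unfold tmul
        simp only [Fin.sum_univ_two]
        norm_num
        ring
      have hBz : ∀ (p p' : σ ⊕ τ) kk, (∃ j', p' = Sum.inr j') →
          tmul U U W F p p' kk = 0 := by
        rintro p p' kk ⟨j', rfl⟩
        rw [hBfac]
        have h := hq2 j'
        simp only [Fin.sum_univ_two]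
        rw [h]
        ring
      have hBz' : ∀ (p p' : σ ⊕ τ) kk, (∃ j, p = Sum.inr j) →
          tmul U U W F p p' kk = 0 := by
        rintro p p' kk ⟨j, rfl⟩
        rw [hBfac]
        have h := hq2 j
        simp only [Fin.sum_univ_two]
        rw [h]
        ring
      exact endgame A₁ A₂ A hA1 hA2 hA3 hA4 U W F hU hW hmin hcond _ _ hX hB1
        (fun i j k => hBz' _ _ _ ⟨i, rfl⟩) (fun i j k => hBz _ _ _ ⟨j, rfl⟩)
        (fun i j k => hBz' _ _ _ ⟨i, rfl⟩)
    · -- s2 invertible: G vanishes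
      have hG0 : ∀ (kk : ν) (a b : Fin 2), G kk a b = 0 := by
        intro kk a b
        have e1 := hGs2 kk a 0
        have e2 := hGs2 kk a 1
        rw [hs2symm 1 0] at e1
        have e1' : s2 0 0 * G kk a 0 + s2 0 1 * G kk a 1 = 0 := by linear_combination e1
        have e2' : s2 0 1 * G kk a 0 + s2 1 1 * G kk a 1 = 0 := by linear_combination e2
        obtain ⟨h0, h1⟩ := solve2 hd2 e1' e2'
        fin_cases b
        · exact h0
        · exact h1
      have hB0 : ∀ p p' kk, tmul U U W F p p' kk = 0 := by
        intro p p' kk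
        rw [hBform]
        simp [hG0]
      obtain ⟨e, e', hee⟩ := Fintype.exists_pair_of_one_lt_card (α := σ) (by omega)
      have hX : orthCols (fun i (a : Fin 2) =>
          if a = 0 then (if i = e then (1 : ℝ) else 0) else (if i = e' then (1 : ℝ) else 0)) := by
        intro a b
        fin_cases a <;> fin_cases b <;>
          simp [Finset.sum_ite_eq', mul_ite, ite_mul, Finset.mem_univ, hee, Ne.symm hee]
      exact endgame A₁ A₂ A hA1 hA2 hA3 hA4 U W F hU hW hmin hcond _ (fun _ _ _ => (0 : ℝ)) hX
        (fun i j k => by rw [hB0]; simp [tmul]) (fun i j k => hB0 _ _ _)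
        (fun i j k => hB0 _ _ _) (fun i j k => hB0 _ _ _)

end Stmt9

/-- for a nonnegative block-diagonal (1,2)-symmetric tensor with irreducible
blocks, under the strict inequality conditions ruling out one-block solutions, the unique
best rank-(2,2,2) approximation has (a Grassmann representative with) block-diagonal `U`
and diagonal 3-slices of the core, the diagonal entries being the cores of the blocks. -/
theorem stmt_9 {m₁ m₂ n : ℕ}
    (A₁ : Fin m₁ → Fin m₁ → Fin n → ℝ) (A₂ : Fin m₂ → Fin m₂ → Fin n → ℝ)
    (A : (Fin m₁ ⊕ Fin m₂) → (Fin m₁ ⊕ Fin m₂) → Fin n → ℝ)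
    (hA : A = fun p q k => match p, q with
      | Sum.inl i, Sum.inl j => A₁ i j k
      | Sum.inr i, Sum.inr j => A₂ i j k
      | _, _ => 0)
    (hsym : ∀ p q k, A p q k = A q p k)
    (hnn : ∀ p q k, 0 ≤ A p q k)
    (h1 : IrreducibleTensor A₁) (h2 : IrreducibleTensor A₂)
    (hcond1 : sInf {r : ℝ | ∃ (X : (Fin m₁ ⊕ Fin m₂) → Fin 2 → ℝ)
        (Z : Fin n → Fin 2 → ℝ) (H : Fin 2 → Fin 2 → Fin 2 → ℝ),
        orthCols X ∧ orthCols Z ∧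
        r = fro2 (fun p q k => A p q k - tmul X X Z H p q k)}
      < sInf {r : ℝ | ∃ (X : Fin m₁ → Fin 2 → ℝ)
        (Z : Fin n → Fin 2 → ℝ) (H : Fin 2 → Fin 2 → Fin 2 → ℝ),
        orthCols X ∧ orthCols Z ∧
        r = fro2 (fun i j k => A₁ i j k - tmul X X Z H i j k)} + fro2 A₂)
    (hcond2 : sInf {r : ℝ | ∃ (X : (Fin m₁ ⊕ Fin m₂) → Fin 2 → ℝ)
        (Z : Fin n → Fin 2 → ℝ) (H : Fin 2 → Fin 2 → Fin 2 → ℝ),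
        orthCols X ∧ orthCols Z ∧
        r = fro2 (fun p q k => A p q k - tmul X X Z H p q k)}
      < sInf {r : ℝ | ∃ (X : Fin m₂ → Fin 2 → ℝ)
        (Z : Fin n → Fin 2 → ℝ) (H : Fin 2 → Fin 2 → Fin 2 → ℝ),
        orthCols X ∧ orthCols Z ∧
        r = fro2 (fun i j k => A₂ i j k - tmul X X Z H i j k)} + fro2 A₁)
    (U : (Fin m₁ ⊕ Fin m₂) → Fin 2 → ℝ) (W : Fin n → Fin 2 → ℝ)
    (F : Fin 2 → Fin 2 → Fin 2 → ℝ)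
    (hU : orthCols U) (hW : orthCols W)
    (hmin : ∀ (X : (Fin m₁ ⊕ Fin m₂) → Fin 2 → ℝ) (Z : Fin n → Fin 2 → ℝ)
      (H : Fin 2 → Fin 2 → Fin 2 → ℝ), orthCols X → orthCols Z →
      fro2 (fun p q k => A p q k - tmul U U W F p q k)
        ≤ fro2 (fun p q k => A p q k - tmul X X Z H p q k))
    (huniq : ∀ (X : (Fin m₁ ⊕ Fin m₂) → Fin 2 → ℝ) (Z : Fin n → Fin 2 → ℝ)
      (H : Fin 2 → Fin 2 → Fin 2 → ℝ), orthCols X → orthCols Z →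
      fro2 (fun p q k => A p q k - tmul X X Z H p q k)
        = fro2 (fun p q k => A p q k - tmul U U W F p q k)
      → tmul X X Z H = tmul U U W F) :
    ∃ Q ∈ Matrix.orthogonalGroup (Fin 2) ℝ,
      ∃ U' : (Fin m₁ ⊕ Fin m₂) → Fin 2 → ℝ,
        U' = (fun p a => ∑ b, U p b * Q b a) ∧
        (∀ i, U' (inl i) 1 = 0) ∧ (∀ j, U' (inr j) 0 = 0) ∧
        (∀ c, (∑ p, ∑ q, ∑ k, A p q k * U' p 0 * U' q 1 * W k c) = 0) ∧
        (∀ c, (∑ p, ∑ q, ∑ k, A p q k * U' p 1 * U' q 0 * W k c) = 0) ∧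
        (∀ c, (∑ p, ∑ q, ∑ k, A p q k * U' p 0 * U' q 0 * W k c)
          = ∑ i, ∑ j, ∑ k, A₁ i j k * U' (inl i) 0 * U' (inl j) 0 * W k c) ∧
        (∀ c, (∑ p, ∑ q, ∑ k, A p q k * U' p 1 * U' q 1 * W k c)
          = ∑ i, ∑ j, ∑ k, A₂ i j k * U' (inr i) 1 * U' (inr j) 1 * W k c) := by
  classical
  have hA1 : ∀ i j k, A (Sum.inl i) (Sum.inl j) k = A₁ i j k := by intro i j k; rw [hA]
  have hA2 : ∀ i j k, A (Sum.inr i) (Sum.inr j) k = A₂ i j k := by intro i j k; rw [hA]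
  have hA3 : ∀ (i : Fin m₁) (j : Fin m₂) k, A (Sum.inl i) (Sum.inr j) k = 0 := by
    intro i j k; rw [hA]
  have hA4 : ∀ (i : Fin m₂) (j : Fin m₁) k, A (Sum.inr i) (Sum.inl j) k = 0 := by
    intro i j k; rw [hA]
  -- Step 1: sign-flip symmetry forces the cross blocks of the approximation to vanish
  set X0 : (Fin m₁ ⊕ Fin m₂) → Fin 2 → ℝ :=
    fun p a => Sum.elim (fun i => U (Sum.inl i) a) (fun j => -U (Sum.inr j) a) p with hX0def
  have hX0l : ∀ i a, X0 (Sum.inl i) a = U (Sum.inl i) a := fun _ _ => rfl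
  have hX0r : ∀ j a, X0 (Sum.inr j) a = -U (Sum.inr j) a := fun _ _ => rfl
  have hX0orth : orthCols X0 := by
    intro a b
    rw [← hU a b, Fintype.sum_sum_type, Fintype.sum_sum_type]
    congr 1
    exact Finset.sum_congr rfl fun j _ => by rw [hX0r, hX0r]; ring
  have hX0lr : ∀ i j k, tmul X0 X0 W F (Sum.inl i) (Sum.inr j) k
      = -tmul U U W F (Sum.inl i) (Sum.inr j) k := by
    intro i j k
    unfold tmul
    rw [← Finset.sum_neg_distrib]
    refine Finset.sum_congr rfl fun a _ => ?_
    rw [← Finset.sum_neg_distrib]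
    refine Finset.sum_congr rfl fun b _ => ?_
    rw [← Finset.sum_neg_distrib]
    refine Finset.sum_congr rfl fun c _ => ?_
    rw [hX0l, hX0r]
    ring
  have hX0rl : ∀ j i k, tmul X0 X0 W F (Sum.inr j) (Sum.inl i) k
      = -tmul U U W F (Sum.inr j) (Sum.inl i) k := by
    intro j i k
    unfold tmul
    rw [← Finset.sum_neg_distrib]
    refine Finset.sum_congr rfl fun a _ => ?_
    rw [← Finset.sum_neg_distrib]
    refine Finset.sum_congr rfl fun b _ => ?_
    rw [← Finset.sum_neg_distrib]
    refine Finset.sum_congr rfl fun c _ => ?_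
    rw [hX0l, hX0r]
    ring
  have hX0rr : ∀ j j' k, tmul X0 X0 W F (Sum.inr j) (Sum.inr j') k
      = tmul U U W F (Sum.inr j) (Sum.inr j') k := by
    intro j j' k
    unfold tmul
    refine Finset.sum_congr rfl fun a _ => Finset.sum_congr rfl fun b _ =>
      Finset.sum_congr rfl fun c _ => ?_
    rw [hX0r, hX0r]
    ring
  have hfroX0 : fro2 (fun p q k => A p q k - tmul X0 X0 W F p q k)
      = fro2 (fun p q k => A p q k - tmul U U W F p q k) := by
    unfold fro2
    refine Finset.sum_congr rfl fun p _ => Finset.sum_congr rfl fun q _ =>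
      Finset.sum_congr rfl fun k _ => ?_
    show (A p q k - tmul X0 X0 W F p q k) ^ 2 = (A p q k - tmul U U W F p q k) ^ 2
    rcases p with i | j <;> rcases q with i' | j'
    · rfl
    · rw [hX0lr, hA3]
      ring
    · rw [hX0rl, hA4]
      ring
    · rw [hX0rr]
  have huX := huniq X0 W F hX0orth hW hfroX0
  have hcL : ∀ i j k, tmul U U W F (Sum.inl i) (Sum.inr j) k = 0 := by
    intro i j k
    have h := congrFun (congrFun (congrFun huX (Sum.inl i)) (Sum.inr j)) k
    rw [hX0lr] at h
    linarith
  have hcR : ∀ j i k, tmul U U W F (Sum.inr j) (Sum.inl i) k = 0 := by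
    intro j i k
    have h := congrFun (congrFun (congrFun huX (Sum.inr j)) (Sum.inl i)) k
    rw [hX0rl] at h
    linarith
  -- Step 2: case analysis on the Gram determinants
  by_cases hd1 : (∑ i, U (Sum.inl i) 0 * U (Sum.inl i) 0) *
      (∑ i, U (Sum.inl i) 1 * U (Sum.inl i) 1)
      - (∑ i, U (Sum.inl i) 0 * U (Sum.inl i) 1) ^ 2 = 0
  · by_cases hd2 : (∑ j, U (Sum.inr j) 0 * U (Sum.inr j) 0) *
        (∑ j, U (Sum.inr j) 1 * U (Sum.inr j) 1)
        - (∑ j, U (Sum.inr j) 0 * U (Sum.inr j) 1) ^ 2 = 0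
    · -- good case
      have hsum : ∀ a b : Fin 2, (∑ i, U (Sum.inl i) a * U (Sum.inl i) b) +
          (∑ j, U (Sum.inr j) a * U (Sum.inr j) b) = if a = b then (1 : ℝ) else 0 := by
        intro a b
        rw [← hU a b, Fintype.sum_sum_type]
      set a1 := ∑ i, U (Sum.inl i) 0 * U (Sum.inl i) 0 with ha1
      set b1 := ∑ i, U (Sum.inl i) 0 * U (Sum.inl i) 1 with hb1
      set c1 := ∑ i, U (Sum.inl i) 1 * U (Sum.inl i) 1 with hc1
      have hb1' : (∑ i, U (Sum.inl i) 1 * U (Sum.inl i) 0) = b1 := by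
        rw [hb1]
        exact Finset.sum_congr rfl fun i _ => mul_comm _ _
      have h200 : (∑ j, U (Sum.inr j) 0 * U (Sum.inr j) 0) = 1 - a1 := by
        have h := hsum 0 0
        rw [if_pos rfl] at h
        linarith
      have h201 : (∑ j, U (Sum.inr j) 0 * U (Sum.inr j) 1) = -b1 := by
        have h := hsum 0 1
        rw [if_neg (by decide)] at h
        linarith
      have h210 : (∑ j, U (Sum.inr j) 1 * U (Sum.inr j) 0) = -b1 := by
        have h := hsum 1 0
        rw [if_neg (by decide), hb1'] at h
        linarith
      have h211 : (∑ j, U (Sum.inr j) 1 * U (Sum.inr j) 1) = 1 - c1 := by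
        have h := hsum 1 1
        rw [if_pos rfl] at h
        linarith
      rw [h200, h201, h211] at hd2
      have htrace : a1 + c1 = 1 := by linear_combination hd1 - hd2
      have ha1nn : 0 ≤ a1 := by
        rw [ha1]
        exact Finset.sum_nonneg fun i _ => mul_self_nonneg _
      have hc1nn : 0 ≤ c1 := by
        rw [hc1]
        exact Finset.sum_nonneg fun i _ => mul_self_nonneg _
      obtain ⟨t, v, ht, hv, he1, he2, he3⟩ :=
        Stmt9.psd_rank1 ha1nn hc1nn hd1 (by rw [htrace]; norm_num)
      have ht1 : t = 1 := by linear_combination htrace - he1 - he3 - t * hv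
      rw [ht1, one_mul] at he1 he2 he3
      -- the second block is orthogonal to v
      have hz2 : ∀ j, U (Sum.inr j) 0 * v 0 + U (Sum.inr j) 1 * v 1 = 0 := by
        have hqs : ∑ j, (∑ a, U (Sum.inr j) a * v a) ^ 2 = 0 := by
          rw [Stmt9.quad_sum]
          simp only [Fin.sum_univ_two]
          rw [h200, h201, h210, h211]
          linear_combination (-(v 0 * v 0)) * he1 + (-(2 * v 0 * v 1)) * he2 +
            (-(v 1 * v 1)) * he3 + (-(v 0 ^ 2 + v 1 ^ 2)) * hv
        intro j
        have h := Stmt9.sum_sq_zero hqs j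
        simpa [Fin.sum_univ_two] using h
      -- the first block is orthogonal to (-v₁, v₀)
      have hz1 : ∀ i, U (Sum.inl i) 0 * -(v 1) + U (Sum.inl i) 1 * v 0 = 0 := by
        have hqs : ∑ i, (∑ a, U (Sum.inl i) a * (![-(v 1), v 0]) a) ^ 2 = 0 := by
          rw [Stmt9.quad_sum]
          simp only [Fin.sum_univ_two, Matrix.cons_val_zero, Matrix.cons_val_one,
            Matrix.head_cons]
          rw [← ha1, ← hb1, hb1', ← hc1]
          linear_combination (v 1 * v 1) * he1 + (-(2 * v 0 * v 1)) * he2 +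
            (v 0 * v 0) * he3
        intro i
        have h := Stmt9.sum_sq_zero hqs i
        simpa [Fin.sum_univ_two] using h
      -- assemble the conclusion
      refine ⟨Matrix.of ![![v 0, -(v 1)], ![v 1, v 0]], ?_, _, rfl, ?_, ?_, ?_, ?_, ?_, ?_⟩
      · rw [Matrix.mem_orthogonalGroup_iff]
        ext x y
        rw [Matrix.mul_apply]
        fin_cases x <;> fin_cases y <;>
          simp [Fin.sum_univ_two, Matrix.one_apply] <;>
          first
          | linear_combination hv
          | linear_combination -hv
          | ring
      · intro i
        simp only [Fin.sum_univ_two, Matrix.of_apply, Matrix.cons_val', Matrix.cons_val_zero,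
          Matrix.cons_val_one, Matrix.head_cons, Matrix.empty_val', Matrix.cons_val_fin_one,
          Matrix.head_fin_const]
        exact hz1 i
      · intro j
        simp only [Fin.sum_univ_two, Matrix.of_apply, Matrix.cons_val', Matrix.cons_val_zero,
          Matrix.cons_val_one, Matrix.head_cons, Matrix.empty_val', Matrix.cons_val_fin_one,
          Matrix.head_fin_const]
        exact hz2 j
      · intro c
        have hzc1 : ∀ i, (∑ b, U (Sum.inl i) b *
            (Matrix.of ![![v 0, -(v 1)], ![v 1, v 0]]) b 1) = 0 := by
          intro i
          simp only [Fin.sum_univ_two, Matrix.of_apply, Matrix.cons_val', Matrix.cons_val_zero,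
            Matrix.cons_val_one, Matrix.head_cons, Matrix.empty_val', Matrix.cons_val_fin_one,
            Matrix.head_fin_const]
          exact hz1 i
        have hzc2 : ∀ j, (∑ b, U (Sum.inr j) b *
            (Matrix.of ![![v 0, -(v 1)], ![v 1, v 0]]) b 0) = 0 := by
          intro j
          simp only [Fin.sum_univ_two, Matrix.of_apply, Matrix.cons_val', Matrix.cons_val_zero,
            Matrix.cons_val_one, Matrix.head_cons, Matrix.empty_val', Matrix.cons_val_fin_one,
            Matrix.head_fin_const]
          exact hz2 j
        simp only [Fintype.sum_sum_type, hA1, hA2, hA3, hA4, hzc1, hzc2]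
        simp
      · intro c
        have hzc1 : ∀ i, (∑ b, U (Sum.inl i) b *
            (Matrix.of ![![v 0, -(v 1)], ![v 1, v 0]]) b 1) = 0 := by
          intro i
          simp only [Fin.sum_univ_two, Matrix.of_apply, Matrix.cons_val', Matrix.cons_val_zero,
            Matrix.cons_val_one, Matrix.head_cons, Matrix.empty_val', Matrix.cons_val_fin_one,
            Matrix.head_fin_const]
          exact hz1 i
        have hzc2 : ∀ j, (∑ b, U (Sum.inr j) b *
            (Matrix.of ![![v 0, -(v 1)], ![v 1, v 0]]) b 0) = 0 := by
          intro j
          simp only [Fin.sum_univ_two, Matrix.of_apply, Matrix.cons_val', Matrix.cons_val_zero,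
            Matrix.cons_val_one, Matrix.head_cons, Matrix.empty_val', Matrix.cons_val_fin_one,
            Matrix.head_fin_const]
          exact hz2 j
        simp only [Fintype.sum_sum_type, hA1, hA2, hA3, hA4, hzc1, hzc2]
        simp
      · intro c
        have hzc2 : ∀ j, (∑ b, U (Sum.inr j) b *
            (Matrix.of ![![v 0, -(v 1)], ![v 1, v 0]]) b 0) = 0 := by
          intro j
          simp only [Fin.sum_univ_two, Matrix.of_apply, Matrix.cons_val', Matrix.cons_val_zero,
            Matrix.cons_val_one, Matrix.head_cons, Matrix.empty_val', Matrix.cons_val_fin_one,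
            Matrix.head_fin_const]
          exact hz2 j
        simp only [Fintype.sum_sum_type, hA1, hA2, hA3, hA4, hzc2]
        simp
      · intro c
        have hzc1 : ∀ i, (∑ b, U (Sum.inl i) b *
            (Matrix.of ![![v 0, -(v 1)], ![v 1, v 0]]) b 1) = 0 := by
          intro i
          simp only [Fin.sum_univ_two, Matrix.of_apply, Matrix.cons_val', Matrix.cons_val_zero,
            Matrix.cons_val_one, Matrix.head_cons, Matrix.empty_val', Matrix.cons_val_fin_one,
            Matrix.head_fin_const]
          exact hz1 i
        simp only [Fintype.sum_sum_type, hA1, hA2, hA3, hA4, hzc1]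
        simp
    · -- second block has full-rank Gram: mirror contradiction via hcond2
      exfalso
      have hfro2swap : ∀ (f : (Fin m₁ ⊕ Fin m₂) → (Fin m₁ ⊕ Fin m₂) → Fin n → ℝ),
          fro2 (fun (p q : Fin m₂ ⊕ Fin m₁) k => f p.swap q.swap k) = fro2 f := by
        intro f
        unfold fro2
        refine Fintype.sum_equiv (Equiv.sumComm (Fin m₂) (Fin m₁)) _ _ fun p => ?_
        refine Fintype.sum_equiv (Equiv.sumComm (Fin m₂) (Fin m₁)) _ _ fun q => ?_
        rfl
      have hswapswap : ∀ (X : (Fin m₂ ⊕ Fin m₁) → Fin 2 → ℝ) (Z : Fin n → Fin 2 → ℝ)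
          (H : Fin 2 → Fin 2 → Fin 2 → ℝ) (p q : Fin m₂ ⊕ Fin m₁) (k : Fin n),
          tmul (fun r => X (Sum.swap r)) (fun r => X (Sum.swap r)) Z H p.swap q.swap k
            = tmul X X Z H p q k := by
        intro X Z H p q k
        rcases p with i | j <;> rcases q with i' | j' <;> rfl
      have horthswap : ∀ (X : (Fin m₂ ⊕ Fin m₁) → Fin 2 → ℝ), orthCols X →
          orthCols (fun r => X (Sum.swap r)) := by
        intro X hX a b
        rw [← hX a b]
        exact Fintype.sum_equiv (Equiv.sumComm (Fin m₁) (Fin m₂)) _ _ fun p => rfl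
      have horthswap' : ∀ (X : (Fin m₁ ⊕ Fin m₂) → Fin 2 → ℝ), orthCols X →
          orthCols (fun r => X (Sum.swap r)) := by
        intro X hX a b
        rw [← hX a b]
        exact Fintype.sum_equiv (Equiv.sumComm (Fin m₂) (Fin m₁)) _ _ fun p => rfl
      have hUs : orthCols (fun r : Fin m₂ ⊕ Fin m₁ => U (Sum.swap r)) := horthswap' U hU
      have hfroB : fro2 (fun (p q : Fin m₂ ⊕ Fin m₁) k => A (Sum.swap p) (Sum.swap q) k
            - tmul (fun r : Fin m₂ ⊕ Fin m₁ => U (Sum.swap r))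
              (fun r : Fin m₂ ⊕ Fin m₁ => U (Sum.swap r)) W F p q k)
          = fro2 (fun p q k => A p q k - tmul U U W F p q k) :=
        hfro2swap (fun p q k => A p q k - tmul U U W F p q k)
      have hmin' : ∀ (X : (Fin m₂ ⊕ Fin m₁) → Fin 2 → ℝ) (Z : Fin n → Fin 2 → ℝ)
          (H : Fin 2 → Fin 2 → Fin 2 → ℝ), orthCols X → orthCols Z →
          fro2 (fun (p q : Fin m₂ ⊕ Fin m₁) k => A (Sum.swap p) (Sum.swap q) k
            - tmul (fun r : Fin m₂ ⊕ Fin m₁ => U (Sum.swap r))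
              (fun r : Fin m₂ ⊕ Fin m₁ => U (Sum.swap r)) W F p q k)
          ≤ fro2 (fun (p q : Fin m₂ ⊕ Fin m₁) k => A (Sum.swap p) (Sum.swap q) k
            - tmul X X Z H p q k) := by
        intro X Z H hX hZ
        rw [hfroB]
        have heq : (fun (p q : Fin m₂ ⊕ Fin m₁) k => A (Sum.swap p) (Sum.swap q) k
              - tmul X X Z H p q k)
            = (fun (p q : Fin m₂ ⊕ Fin m₁) k =>
              (fun p' q' k' => A p' q' k' - tmul (fun r => X (Sum.swap r))
                (fun r => X (Sum.swap r)) Z H p' q' k') p.swap q.swap k) := by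
          funext p q k
          simp only
          rw [hswapswap]
        rw [heq, hfro2swap (fun p' q' k' => A p' q' k' - tmul (fun r => X (Sum.swap r))
          (fun r => X (Sum.swap r)) Z H p' q' k')]
        exact hmin _ Z H (horthswap X hX) hZ
      have hsetEq : {r : ℝ | ∃ (X : (Fin m₂ ⊕ Fin m₁) → Fin 2 → ℝ)
            (Z : Fin n → Fin 2 → ℝ) (H : Fin 2 → Fin 2 → Fin 2 → ℝ),
            orthCols X ∧ orthCols Z ∧
            r = fro2 (fun (p q : Fin m₂ ⊕ Fin m₁) k =>
              A (Sum.swap p) (Sum.swap q) k - tmul X X Z H p q k)}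
          = {r : ℝ | ∃ (X : (Fin m₁ ⊕ Fin m₂) → Fin 2 → ℝ)
            (Z : Fin n → Fin 2 → ℝ) (H : Fin 2 → Fin 2 → Fin 2 → ℝ),
            orthCols X ∧ orthCols Z ∧
            r = fro2 (fun p q k => A p q k - tmul X X Z H p q k)} := by
        ext r
        constructor
        · rintro ⟨X, Z, H, hX, hZ, rfl⟩
          refine ⟨fun p => X (Sum.swap p), Z, H, horthswap X hX, hZ, ?_⟩
          have heq : (fun (p q : Fin m₂ ⊕ Fin m₁) k => A (Sum.swap p) (Sum.swap q) k
                - tmul X X Z H p q k)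
              = (fun (p q : Fin m₂ ⊕ Fin m₁) k =>
                (fun p' q' k' => A p' q' k' - tmul (fun r => X (Sum.swap r))
                  (fun r => X (Sum.swap r)) Z H p' q' k') p.swap q.swap k) := by
            funext p q k
            simp only
            rw [hswapswap]
          rw [heq, hfro2swap (fun p' q' k' => A p' q' k' - tmul (fun r => X (Sum.swap r))
            (fun r => X (Sum.swap r)) Z H p' q' k')]
        · rintro ⟨X, Z, H, hX, hZ, rfl⟩
          refine ⟨fun p => X (Sum.swap p), Z, H, horthswap' X hX, hZ, ?_⟩
          exact (hfro2swap (fun p q k => A p q k - tmul X X Z H p q k)).symm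
      refine Stmt9.oneSide (σ := Fin m₂) (τ := Fin m₁) A₂ A₁
        (fun p q k => A (Sum.swap p) (Sum.swap q) k)
        (fun i j k => hA2 i j k) (fun i j k => hA1 i j k)
        (fun i j k => hA4 i j k) (fun i j k => hA3 i j k)
        (fun r => U (Sum.swap r)) W F hUs hW hmin' ?_
        (fun i j k => hcR i j k) (fun j i k => hcL j i k) hd2
      rw [hsetEq]
      exact hcond2
  · exact (Stmt9.oneSide A₁ A₂ A hA1 hA2 hA3 hA4 U W F hU hW hmin hcond1 hcL hcR hd1).elim
end
end

section
/- Let A ∈ ℝ^{m×m×n} be (1,2)-symmetric and suppose the best rank-(r₁,r₁,r₃) approximation problem min ‖A − (X,Y,Z)·S‖ over X,Y ∈ ℝ^{m×r₁}, Z ∈ ℝ^{n×r₃} with orthonormal columns (with unconstrained core S) has a unique solution (U,V,W) up to Grassmann equivalence. Then representatives can be chosen with U = V, and the corresponding core F = A·(U,U,W) is (1,2)-symmetric, i.e. every 3-slice F(:,:,k) is a symmetric r₁×r₁ matrix. -/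
open scoped BigOperators
open Sum

noncomputable section

/-! ### Auxiliary lemmas -/

section Aux

set_option linter.unusedSectionVars false

variable {α β γ δ α' β' γ' : Type*} [Fintype α] [Fintype β] [Fintype γ]
  [Fintype α'] [Fintype β'] [Fintype γ']

private lemma pack3 (f : α → β → γ → ℝ) :
    (∑ a, ∑ b, ∑ c, f a b c) = ∑ x : α × β × γ, f x.1 x.2.1 x.2.2 := by
  rw [Fintype.sum_prod_type]
  exact Finset.sum_congr rfl fun a _ => by rw [Fintype.sum_prod_type]

private lemma sum6_comm (f : α → β → γ → α' → β' → γ' → ℝ) :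
    (∑ a, ∑ b, ∑ c, ∑ p, ∑ q, ∑ r, f a b c p q r)
      = ∑ p, ∑ q, ∑ r, ∑ a, ∑ b, ∑ c, f a b c p q r := by
  have h1 : (∑ a, ∑ b, ∑ c, ∑ p, ∑ q, ∑ r, f a b c p q r)
      = ∑ x : α × β × γ, ∑ y : α' × β' × γ',
        f x.1 x.2.1 x.2.2 y.1 y.2.1 y.2.2 := by
    rw [pack3 (f := fun a b c => ∑ p, ∑ q, ∑ r, f a b c p q r)]
    exact Finset.sum_congr rfl fun x _ => pack3 _
  have h2 : (∑ p, ∑ q, ∑ r, ∑ a, ∑ b, ∑ c, f a b c p q r)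
      = ∑ y : α' × β' × γ', ∑ x : α × β × γ,
        f x.1 x.2.1 x.2.2 y.1 y.2.1 y.2.2 := by
    rw [pack3 (f := fun p q r => ∑ a, ∑ b, ∑ c, f a b c p q r)]
    exact Finset.sum_congr rfl fun y _ => pack3 _
  rw [h1, h2, Finset.sum_comm]

private lemma sum3_rev (f : α → β → γ → ℝ) :
    (∑ c, ∑ b, ∑ a, f a b c) = ∑ a, ∑ b, ∑ c, f a b c := by
  calc (∑ c, ∑ b, ∑ a, f a b c) = ∑ b, ∑ c, ∑ a, f a b c := Finset.sum_comm
    _ = ∑ b, ∑ a, ∑ c, f a b c := Finset.sum_congr rfl fun b _ => Finset.sum_comm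
    _ = ∑ a, ∑ b, ∑ c, f a b c := Finset.sum_comm

/-- Matrix product of two "row-family" matrices. -/
private def mm [Fintype β] (X : α → β → ℝ) (Y : β → γ → ℝ) : α → γ → ℝ :=
  fun i p => ∑ a, X i a * Y a p

private def idm (α : Type*) [DecidableEq α] : α → α → ℝ :=
  fun i j => if i = j then 1 else 0

private lemma mm_id_left [DecidableEq α] (X : α → β → ℝ) : mm (idm α) X = X := by
  funext i p
  simp [mm, idm, ite_mul]

private lemma mm_id_right [DecidableEq β] (X : α → β → ℝ) : mm X (idm β) = X := by
  funext i p
  simp [mm, idm, mul_ite]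

private lemma mm_assoc (X : α → β → ℝ) (Y : β → γ → ℝ) (Z : γ → δ → ℝ) [Fintype δ] :
    mm (mm X Y) Z = mm X (mm Y Z) := by
  funext i p
  simp only [mm, Finset.sum_mul, Finset.mul_sum]
  rw [Finset.sum_comm]
  exact Finset.sum_congr rfl fun a _ => Finset.sum_congr rfl fun b _ => by ring

private lemma tmul_comp {ι₁ ι₂ ι₃ : Type*} [Fintype ι₁] [Fintype ι₂] [Fintype ι₃]
    (X : α → α' → ℝ) (Y : β → β' → ℝ) (Z : γ → γ' → ℝ)
    (X' : α' → ι₁ → ℝ) (Y' : β' → ι₂ → ℝ) (Z' : γ' → ι₃ → ℝ)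
    (B : ι₁ → ι₂ → ι₃ → ℝ) :
    tmul X Y Z (tmul X' Y' Z' B) = tmul (mm X X') (mm Y Y') (mm Z Z') B := by
  funext i j k
  simp only [tmul, mm, Finset.mul_sum, Finset.sum_mul]
  rw [sum6_comm]
  refine Finset.sum_congr rfl fun p _ => Finset.sum_congr rfl fun q _ =>
    Finset.sum_congr rfl fun r _ => ?_
  rw [← sum3_rev]
  refine Finset.sum_congr rfl fun a _ =>
    Finset.sum_congr rfl fun b _ => Finset.sum_congr rfl fun c _ => by ring

private lemma tmul_id [DecidableEq α] [DecidableEq β] [DecidableEq γ]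
    (G : α → β → γ → ℝ) : tmul (idm α) (idm β) (idm γ) G = G := by
  funext i j k
  simp [tmul, idm, ite_mul, mul_ite]

/-- Frobenius inner product of two 3-tensors. -/
private def ip3 (P Q : α → β → γ → ℝ) : ℝ := ∑ i, ∑ j, ∑ k, P i j k * Q i j k

private lemma ip3_adjoint (X : α → α' → ℝ) (Y : β → β' → ℝ) (Z : γ → γ' → ℝ)
    (A : α → β → γ → ℝ) (G : α' → β' → γ' → ℝ) :
    ip3 A (tmul X Y Z G)
      = ip3 (tmul (fun a i => X i a) (fun b j => Y j b) (fun c k => Z k c) A) G := by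
  simp only [ip3, tmul, Finset.mul_sum, Finset.sum_mul]
  rw [sum6_comm]
  refine Finset.sum_congr rfl fun a _ => Finset.sum_congr rfl fun b _ =>
    Finset.sum_congr rfl fun c _ => ?_
  refine Finset.sum_congr rfl fun i _ =>
    Finset.sum_congr rfl fun j _ => Finset.sum_congr rfl fun k _ => by ring

private lemma tmul_sub {ι₁ ι₂ ι₃ : Type*} [Fintype ι₁] [Fintype ι₂] [Fintype ι₃]
    (X : α → ι₁ → ℝ) (Y : β → ι₂ → ℝ) (Z : γ → ι₃ → ℝ) (P Q : ι₁ → ι₂ → ι₃ → ℝ) :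
    tmul X Y Z (fun a b c => P a b c - Q a b c)
      = fun i j k => tmul X Y Z P i j k - tmul X Y Z Q i j k := by
  funext i j k
  simp [tmul, mul_sub, Finset.sum_sub_distrib]

private lemma fro2_nonneg_s17 (P : α → β → γ → ℝ) : 0 ≤ fro2 P :=
  Finset.sum_nonneg fun _ _ => Finset.sum_nonneg fun _ _ =>
    Finset.sum_nonneg fun _ _ => sq_nonneg _

private lemma fro2_expand (P Q : α → β → γ → ℝ) :
    fro2 (fun i j k => P i j k - Q i j k) = fro2 P - 2 * ip3 P Q + fro2 Q := by
  simp only [fro2, ip3, sub_sq, Finset.sum_add_distrib, Finset.sum_sub_distrib,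
    Finset.mul_sum, mul_assoc]

/-- The least-squares optimality of the core `A·(Xᵀ,Yᵀ,Zᵀ)`. -/
private lemma lsq {ι₁ ι₂ ι₃ κ₁ κ₂ κ₃ : Type*}
    [Fintype ι₁] [Fintype ι₂] [Fintype ι₃]
    [Fintype κ₁] [Fintype κ₂] [Fintype κ₃]
    [DecidableEq κ₁] [DecidableEq κ₂] [DecidableEq κ₃]
    (X : ι₁ → κ₁ → ℝ) (Y : ι₂ → κ₂ → ℝ) (Z : ι₃ → κ₃ → ℝ)
    (hX : orthCols X) (hY : orthCols Y) (hZ : orthCols Z)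
    (A : ι₁ → ι₂ → ι₃ → ℝ) (T : κ₁ → κ₂ → κ₃ → ℝ) :
    fro2 (fun i j k => A i j k
        - tmul X Y Z (tmul (fun a i => X i a) (fun b j => Y j b) (fun c k => Z k c) A) i j k)
      ≤ fro2 (fun i j k => A i j k - tmul X Y Z T i j k) := by
  set F := tmul (fun a i => X i a) (fun b j => Y j b) (fun c k => Z k c) A with hF
  have h1 : mm (fun a i => X i a) X = idm κ₁ := by
    funext a b; simpa [mm, idm] using hX a b
  have h2 : mm (fun b j => Y j b) Y = idm κ₂ := by
    funext a b; simpa [mm, idm] using hY a b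
  have h3 : mm (fun c k => Z k c) Z = idm κ₃ := by
    funext a b; simpa [mm, idm] using hZ a b
  have hcore : tmul (fun a i => X i a) (fun b j => Y j b) (fun c k => Z k c)
      (tmul X Y Z F) = F := by
    rw [tmul_comp, h1, h2, h3, tmul_id]
  have hperp : ip3 (fun i j k => A i j k - tmul X Y Z F i j k)
      (tmul X Y Z (fun a b c => T a b c - F a b c)) = 0 := by
    rw [ip3_adjoint, tmul_sub, hcore, ← hF]
    simp [ip3]
  have hd : (fun i j k => A i j k - tmul X Y Z T i j k)
      = fun i j k => (A i j k - tmul X Y Z F i j k)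
          - tmul X Y Z (fun a b c => T a b c - F a b c) i j k := by
    funext i j k
    rw [tmul_sub]
    ring
  rw [hd]
  conv_rhs => rw [fro2_expand]
  rw [hperp]
  have := fro2_nonneg_s17 (tmul X Y Z (fun a b c => T a b c - F a b c))
  linarith

end Aux

/-- if a (1,2)-symmetric tensor has a unique best rank-(r₁,r₁,r₃)
approximation, then representatives can be chosen with `U = V`, and the core
`F = A·(U,U,W)` is (1,2)-symmetric. -/
theorem stmt_17 {m n r₁ r₃ : ℕ}
    (A : Fin m → Fin m → Fin n → ℝ) (hsym : ∀ i j k, A i j k = A j i k)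
    (U V : Fin m → Fin r₁ → ℝ) (W : Fin n → Fin r₃ → ℝ)
    (S : Fin r₁ → Fin r₁ → Fin r₃ → ℝ)
    (hU : orthCols U) (hV : orthCols V) (hW : orthCols W)
    (hmin : ∀ (X Y : Fin m → Fin r₁ → ℝ) (Z : Fin n → Fin r₃ → ℝ)
      (S' : Fin r₁ → Fin r₁ → Fin r₃ → ℝ),
      orthCols X → orthCols Y → orthCols Z →
      fro2 (fun i j k => A i j k - tmul U V W S i j k)
        ≤ fro2 (fun i j k => A i j k - tmul X Y Z S' i j k))
    (huniq : ∀ (X Y : Fin m → Fin r₁ → ℝ) (Z : Fin n → Fin r₃ → ℝ)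
      (S' : Fin r₁ → Fin r₁ → Fin r₃ → ℝ),
      orthCols X → orthCols Y → orthCols Z →
      fro2 (fun i j k => A i j k - tmul X Y Z S' i j k)
        = fro2 (fun i j k => A i j k - tmul U V W S i j k)
      → tmul X Y Z S' = tmul U V W S) :
    ∃ (U' : Fin m → Fin r₁ → ℝ) (W' : Fin n → Fin r₃ → ℝ),
      orthCols U' ∧ orthCols W' ∧
      tmul U' U' W' (fun a b c =>
          tri A (fun i => U' i a) (fun j => U' j b) (fun k => W' k c))
        = tmul U V W S ∧
      (∀ a b c, tri A (fun i => U' i a) (fun j => U' j b) (fun k => W' k c)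
        = tri A (fun i => U' i b) (fun j => U' j a) (fun k => W' k c)) := by
  classical
  -- The transposed-core swap identity.
  have hswapT : ∀ (i j : Fin m) (k : Fin n),
      tmul V U W (fun a b c => S b a c) i j k = tmul U V W S j i k := by
    intro i j k
    simp only [tmul]
    rw [Finset.sum_comm]
    exact Finset.sum_congr rfl fun a _ => Finset.sum_congr rfl fun b _ =>
      Finset.sum_congr rfl fun c _ => by ring
  -- Swapping the first two factors gives the same objective value.
  have hfroswap : fro2 (fun i j k => A i j k - tmul V U W (fun a b c => S b a c) i j k)
      = fro2 (fun i j k => A i j k - tmul U V W S i j k) := by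
    simp only [fro2]
    rw [Finset.sum_comm]
    refine Finset.sum_congr rfl fun i _ => Finset.sum_congr rfl fun j _ =>
      Finset.sum_congr rfl fun k _ => ?_
    rw [hswapT j i k, hsym j i k]
  have hswap := huniq V U W (fun a b c => S b a c) hV hU hW hfroswap
  -- The best approximation is (1,2)-symmetric.
  have hBsym : ∀ i j k, tmul U V W S i j k = tmul U V W S j i k := by
    intro i j k
    have h1 := congrFun (congrFun (congrFun hswap i) j) k
    exact h1.symm.trans (hswapT i j k)
  -- First structured representation: B = U ×₁ Id ×₂ W ×₃ G.
  have hrep1 : tmul U V W S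
      = tmul U (idm (Fin m)) W (fun a p c => ∑ b, V p b * S a b c) := by
    funext i j k
    simp only [tmul, idm, mul_ite, mul_one, mul_zero, ite_mul, zero_mul, one_mul,
      Finset.sum_ite_irrel, Finset.sum_const_zero, Finset.sum_ite_eq,
      Finset.mem_univ, if_true, Finset.mul_sum]
    refine Finset.sum_congr rfl fun a _ => ?_
    rw [Finset.sum_comm]
    exact Finset.sum_congr rfl fun b _ => Finset.sum_congr rfl fun c _ => by ring
  -- Second structured representation (uses (1,2)-symmetry of B).
  have hrep2 : tmul U V W S
      = tmul (idm (Fin m)) U W (fun p a c => ∑ b, V p b * S a b c) := by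
    funext i j k
    rw [hBsym i j k, congrFun (congrFun (congrFun hrep1 j) i) k]
    simp only [tmul, idm, mul_ite, mul_one, mul_zero, ite_mul, zero_mul, one_mul,
      Finset.sum_ite_irrel, Finset.sum_const_zero, Finset.sum_ite_eq,
      Finset.mem_univ, if_true, Finset.mul_sum]
  -- Transposes and Gram identities.
  have hUtU : mm (fun a i => U i a) U = idm (Fin r₁) := by
    funext a b; simpa [mm, idm] using hU a b
  have hWtW : mm (fun c k => W k c) W = idm (Fin r₃) := by
    funext a b; simpa [mm, idm] using hW a b
  have hPUU : mm (mm U (fun a i => U i a)) U = U := by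
    rw [mm_assoc, hUtU, mm_id_right]
  have hPWW : mm (mm W (fun c k => W k c)) W = W := by
    rw [mm_assoc, hWtW, mm_id_right]
  -- Projecting B on modes 2 and 3 leaves it unchanged.
  have hinner : tmul (idm (Fin m)) (mm U (fun a i => U i a)) (mm W (fun c k => W k c))
      (tmul U V W S) = tmul U V W S := by
    conv_lhs => rw [hrep2]
    rw [tmul_comp, mm_id_left, hPUU, hPWW, ← hrep2]
  -- The full projection identity.
  have h3 : tmul U U W (tmul (fun a i => U i a) (fun b j => U j b) (fun c k => W k c)
      (tmul U V W S)) = tmul U V W S := by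
    rw [tmul_comp]
    have hstep : tmul (mm U fun a i => U i a) (mm U fun b j => U j b)
        (mm W fun c k => W k c) (tmul U V W S)
        = tmul (mm U fun a i => U i a) (idm (Fin m)) (idm (Fin n))
          (tmul (idm (Fin m)) (mm U (fun a i => U i a)) (mm W (fun c k => W k c))
            (tmul U V W S)) := by
      conv_rhs => rw [tmul_comp]
      rw [mm_id_right, mm_id_left, mm_id_left]
    rw [hstep, hinner]
    conv_lhs => rw [hrep1]
    rw [tmul_comp, hPUU, mm_id_left, mm_id_left, ← hrep1]
  -- The core of the goal is the transposed-tmul of A.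
  have hF0 : (fun a b c =>
        tri A (fun i => U i a) (fun j => U j b) (fun k => W k c))
      = tmul (fun a i => U i a) (fun b j => U j b) (fun c k => W k c) A := by
    funext a b c
    simp only [tri, tmul]
    exact Finset.sum_congr rfl fun i _ => Finset.sum_congr rfl fun j _ =>
      Finset.sum_congr rfl fun k _ => by ring
  -- Least–squares comparison with the feasible point from the projection.
  have hle : fro2 (fun i j k => A i j k
        - tmul U U W (fun a b c =>
            tri A (fun i => U i a) (fun j => U j b) (fun k => W k c)) i j k)
      ≤ fro2 (fun i j k => A i j k - tmul U V W S i j k) := by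
    have hl := lsq U U W hU hU hW A
      (tmul (fun a i => U i a) (fun b j => U j b) (fun c k => W k c) (tmul U V W S))
    rw [h3] at hl
    rw [hF0]
    exact hl
  have hge := hmin U U W (fun a b c =>
      tri A (fun i => U i a) (fun j => U j b) (fun k => W k c)) hU hU hW
  have hmain := huniq U U W (fun a b c =>
      tri A (fun i => U i a) (fun j => U j b) (fun k => W k c)) hU hU hW
    (le_antisymm hle hge)
  refine ⟨U, W, hU, hW, hmain, ?_⟩
  intro a b c
  simp only [tri]
  rw [Finset.sum_comm]
  exact Finset.sum_congr rfl fun i _ => Finset.sum_congr rfl fun j _ =>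
    Finset.sum_congr rfl fun k _ => by rw [hsym]; ring
end
end
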